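/- arXiv:2303.09532 — 5 statements merged into one kernel-verified Lean document; each statement's English description precedes it below -/
import Mathlib

section
/- Let f : ℝⁿ → ℝ be C¹ and strictly convex with unique global minimizer ȳ, φ : ℝⁿ → ℝ C², strictly convex, Legendre type, with conjugate φ*; set x̄ := ∇φ(ȳ), V(x) := D_{φ*}(x, x̄), q(x, u) := f(∇φ*(x)) + f*(−u) + ⟨u, ȳ⟩. Let u : [0, ∞) → ℝⁿ be locally integrable and let x : [0, ∞) → ℝⁿ satisfy x(0) = x₀ and ẋ(s) = u(s) for almost every s. Then for every t ≥ 0, ∫₀ᵗ q(x(s), u(s)) ds ≥ V(x₀) − V(x(t)). -/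
open scoped RealInnerProductSpace
open Filter MeasureTheory Set Topology

/-- Legendre–Fenchel conjugate: `ψ*(v) = sup_x { ⟨v, x⟩ − ψ(x) }`. -/
noncomputable def fenchel {n : ℕ} (ψ : EuclideanSpace ℝ (Fin n) → ℝ)
    (v : EuclideanSpace ℝ (Fin n)) : ℝ :=
  ⨆ z : EuclideanSpace ℝ (Fin n), (⟪v, z⟫ - ψ z)

/-- Bregman divergence: `D_ψ(y, y') = ψ(y) − ψ(y') − ⟨∇ψ(y'), y − y'⟩`. -/
noncomputable def bregman {n : ℕ} (ψ : EuclideanSpace ℝ (Fin n) → ℝ)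
    (y y' : EuclideanSpace ℝ (Fin n)) : ℝ :=
  ψ y - ψ y' - ⟪gradient ψ y', y - y'⟫

/-- `φ` is of Legendre type: `|∇φ(x)| → ∞` as `|x| → ∞`. -/
def LegendreType {n : ℕ} (φ : EuclideanSpace ℝ (Fin n) → ℝ) : Prop :=
  Tendsto (fun z => ‖gradient φ z‖) (cocompact (EuclideanSpace ℝ (Fin n))) atTop

variable {n : ℕ}




/-- Gradient inequality for convex functions. -/
lemma grad_ineq {ψ : EuclideanSpace ℝ (Fin n) → ℝ} (hc : ConvexOn ℝ Set.univ ψ)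
    {a g : EuclideanSpace ℝ (Fin n)} (hg : HasGradientAt ψ g a)
    (b : EuclideanSpace ℝ (Fin n)) : ψ a + ⟪g, b - a⟫ ≤ ψ b := by
  have hline : ConvexOn ℝ Set.univ (ψ ∘ (AffineMap.lineMap (k := ℝ) a b)) := by
    have := hc.comp_affineMap (AffineMap.lineMap (k := ℝ) a b)
    rwa [Set.preimage_univ] at this
  have hderL : HasDerivAt (fun τ : ℝ => AffineMap.lineMap (k := ℝ) a b τ) (b - a) 0 := by
    have : HasDerivAt (fun τ : ℝ => τ • (b - a) + a) ((1:ℝ) • (b - a)) 0 :=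
      ((hasDerivAt_id (0:ℝ)).smul_const (b - a)).add_const a
    simpa [AffineMap.lineMap_apply_module', one_smul] using this
  have hfd : HasFDerivAt ψ (InnerProductSpace.toDual ℝ (EuclideanSpace ℝ (Fin n)) g) a :=
    hasGradientAt_iff_hasFDerivAt.1 hg
  have hcomp : HasDerivAt (ψ ∘ (AffineMap.lineMap (k := ℝ) a b)) ⟪g, b - a⟫ 0 := by
    have hfd0 : HasFDerivAt ψ (InnerProductSpace.toDual ℝ (EuclideanSpace ℝ (Fin n)) g)
        (AffineMap.lineMap (k := ℝ) a b (0:ℝ)) := by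
      simpa using hfd
    have := hfd0.comp_hasDerivAt (x := (0:ℝ)) hderL
    simpa [InnerProductSpace.toDual_apply_apply] using this
  have hslope := hline.le_slope_of_hasDerivAt (Set.mem_univ (0:ℝ)) (Set.mem_univ (1:ℝ))
    one_pos hcomp
  have : slope (ψ ∘ (AffineMap.lineMap (k := ℝ) a b)) 0 1 = ψ b - ψ a := by
    simp [slope_def_field, AffineMap.lineMap_apply_module']
  rw [this] at hslope
  linarith

/-- Strictly convex differentiable functions have injective gradients. -/
lemma grad_injective {ψ : EuclideanSpace ℝ (Fin n) → ℝ} (hc : StrictConvexOn ℝ Set.univ ψ)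
    (hd : Differentiable ℝ ψ) : Function.Injective (gradient ψ) := by
  intro a b hab
  by_contra hne
  have hmid := hc.2 (Set.mem_univ a) (Set.mem_univ b) hne
    (by norm_num : (0:ℝ) < 1/2) (by norm_num : (0:ℝ) < 1/2) (by norm_num)
  rw [smul_eq_mul, smul_eq_mul] at hmid
  set m := (1/2 : ℝ) • a + (1/2 : ℝ) • b with hm
  have h1 : ψ a + ⟪gradient ψ a, m - a⟫ ≤ ψ m :=
    grad_ineq hc.convexOn (hd a).hasGradientAt m
  have h2 : ψ b + ⟪gradient ψ b, m - b⟫ ≤ ψ m :=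
    grad_ineq hc.convexOn (hd b).hasGradientAt m
  have hma : m - a = (1/2 : ℝ) • (b - a) := by
    rw [hm]; module
  have hmb : m - b = -((1/2 : ℝ) • (b - a)) := by
    rw [hm]; module
  rw [hma] at h1
  rw [hmb, ← hab, inner_neg_right] at h2
  linarith


lemma hasGradientAt_inner (v z : EuclideanSpace ℝ (Fin n)) :
    HasGradientAt (fun w => ⟪v, w⟫) v z :=
  hasGradientAt_iff_hasFDerivAt.2 (by
    exact (InnerProductSpace.toDual ℝ (EuclideanSpace ℝ (Fin n)) v).hasFDerivAt (x := z))

lemma HasGradientAt.sub' {f₁ f₂ : EuclideanSpace ℝ (Fin n) → ℝ}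
    {g₁ g₂ z : EuclideanSpace ℝ (Fin n)} (h₁ : HasGradientAt f₁ g₁ z)
    (h₂ : HasGradientAt f₂ g₂ z) :
    HasGradientAt (fun w => f₁ w - f₂ w) (g₁ - g₂) z := by
  rw [hasGradientAt_iff_hasFDerivAt] at h₁ h₂ ⊢
  simpa [map_sub, Pi.sub_def] using h₁.sub h₂

lemma convexOn_sub_inner {φ : EuclideanSpace ℝ (Fin n) → ℝ} (hc : ConvexOn ℝ Set.univ φ)
    (v : EuclideanSpace ℝ (Fin n)) :
    ConvexOn ℝ Set.univ (fun z => φ z - ⟪v, z⟫) := by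
  refine ⟨convex_univ, fun z _ w _ p q hp hq hpq => ?_⟩
  have := hc.2 (mem_univ z) (mem_univ w) hp hq hpq
  simp only [inner_add_right, real_inner_smul_right, smul_eq_mul] at this ⊢
  linarith

lemma exists_min_grad (φ : EuclideanSpace ℝ (Fin n) → ℝ) (hφ : ContDiff ℝ 2 φ)
    (hconv : StrictConvexOn ℝ Set.univ φ) (hleg : LegendreType φ)
    (v : EuclideanSpace ℝ (Fin n)) :
    ∃ y : EuclideanSpace ℝ (Fin n), gradient φ y = v ∧
      ∀ z, φ y - ⟪v, y⟫ ≤ φ z - ⟪v, z⟫ := by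
  have hdiff : Differentiable ℝ φ := hφ.differentiable two_ne_zero
  set h : EuclideanSpace ℝ (Fin n) → ℝ := fun z => φ z - ⟪v, z⟫ with hh
  have hgh : ∀ z, HasGradientAt h (gradient φ z - v) z := fun z =>
    ((hdiff z).hasGradientAt).sub' (hasGradientAt_inner v z)
  have hconvh : ConvexOn ℝ Set.univ h := convexOn_sub_inner hconv.convexOn v
  set C : ℝ := ‖gradient φ 0 - v‖ with hC
  have hco : Tendsto (fun z => ‖gradient φ z - v‖)
      (cocompact (EuclideanSpace ℝ (Fin n))) atTop := by
    apply tendsto_atTop_mono' _ _ (tendsto_atTop_add_const_right _ (-‖v‖) hleg)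
    exact Eventually.of_forall fun z => by
      have := norm_sub_norm_le (gradient φ z) v
      simp only [Pi.add_apply]
      linarith
  have hev : ∀ᶠ z in cocompact (EuclideanSpace ℝ (Fin n)), C + 1 ≤ ‖gradient φ z - v‖ :=
    hco.eventually_ge_atTop (C + 1)
  rcases mem_cocompact.1 hev with ⟨K, hK, hKsub⟩
  obtain ⟨R, hRpos, hKR⟩ := hK.isBounded.subset_closedBall_lt 0 0
  have hR1 : (0:ℝ) < R + 1 := by linarith
  have hcont : Continuous h := hdiff.continuous.sub (continuous_const.inner continuous_id)
  obtain ⟨y, hymem, hymin⟩ :=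
    (isCompact_closedBall (0 : EuclideanSpace ℝ (Fin n)) (R+1)).exists_isMinOn
    ⟨0, by simpa using hR1.le⟩ hcont.continuousOn
  set g : EuclideanSpace ℝ (Fin n) := gradient φ y - v with hg
  have hynorm : ‖y‖ ≤ R + 1 := mem_closedBall_zero_iff.1 hymem
  have h0mem : (0 : EuclideanSpace ℝ (Fin n)) ∈ Metric.closedBall
      (0 : EuclideanSpace ℝ (Fin n)) (R+1) := by simpa using hR1.le
  have hgC : ‖g‖ ≤ C := by
    rcases eq_or_ne g 0 with hg0 | hg0
    · rw [hg0, norm_zero]; exact norm_nonneg _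
    · have hgn : (0:ℝ) < ‖g‖ := norm_pos_iff.2 hg0
      set w : EuclideanSpace ℝ (Fin n) := (-((R+1)/‖g‖)) • g with hw
      have hwnorm : ‖w‖ = R + 1 := by
        rw [hw, norm_smul, Real.norm_eq_abs, abs_neg, abs_div, abs_of_pos hR1,
          abs_of_pos hgn, div_mul_cancel₀ _ (ne_of_gt hgn)]
      have hwmem : w ∈ Metric.closedBall (0 : EuclideanSpace ℝ (Fin n)) (R+1) :=
        mem_closedBall_zero_iff.2 hwnorm.le
      have htan : w - y ∈ posTangentConeAt
          (Metric.closedBall (0 : EuclideanSpace ℝ (Fin n)) (R+1)) y :=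
        sub_mem_posTangentConeAt_of_segment_subset
          ((convex_closedBall _ _).segment_subset hymem hwmem)
      have hvar : 0 ≤ (InnerProductSpace.toDual ℝ (EuclideanSpace ℝ (Fin n)) g) (w - y) :=
        hymin.localize.hasFDerivWithinAt_nonneg
          ((hasGradientAt_iff_hasFDerivAt.1 (hgh y)).hasFDerivWithinAt) htan
      rw [InnerProductSpace.toDual_apply_apply, inner_sub_right] at hvar
      have hgw : ⟪g, w⟫ = -((R+1) * ‖g‖) := by
        rw [hw, real_inner_smul_right, real_inner_self_eq_norm_mul_norm]
        field_simp
      have hyineq : ⟪g, y⟫ ≤ -((R+1) * ‖g‖) := by rw [← hgw]; linarith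
      have h0y : h y + ⟪g, (0:EuclideanSpace ℝ (Fin n)) - y⟫ ≤ h 0 := grad_ineq hconvh (hgh y) 0
      rw [zero_sub, inner_neg_right] at h0y
      have hy0 : h 0 + ⟪gradient φ 0 - v, y - 0⟫ ≤ h y := grad_ineq hconvh (hgh 0) y
      rw [sub_zero] at hy0
      have hCS : -(C * (R+1)) ≤ ⟪gradient φ 0 - v, y⟫ := by
        have h1 := abs_real_inner_le_norm (gradient φ 0 - v) y
        have h2 : ‖gradient φ 0 - v‖ * ‖y‖ ≤ C * (R+1) := by
          apply mul_le_mul le_rfl hynorm (norm_nonneg _) (norm_nonneg _)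
        have := neg_abs_le ⟪gradient φ 0 - v, y⟫
        linarith
      have : (R+1) * ‖g‖ ≤ C * (R+1) := by linarith
      nlinarith
  have hyR : ‖y‖ ≤ R := by
    by_contra hcon
    have : y ∈ Kᶜ := fun hyK => hcon (mem_closedBall_zero_iff.1 (hKR hyK))
    have := hKsub this
    simp only [mem_setOf_eq] at this
    linarith
  have hg0 : g = 0 := by
    have hnb : Metric.closedBall (0 : EuclideanSpace ℝ (Fin n)) (R+1) ∈ 𝓝 y :=
      Metric.closedBall_mem_nhds_of_mem (by
        rw [Metric.mem_ball, dist_zero_right]; linarith)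
    have hloc : IsLocalMin h y := hymin.isLocalMin hnb
    have hfz := hloc.hasFDerivAt_eq_zero (hasGradientAt_iff_hasFDerivAt.1 (hgh y))
    have := congrArg (fun L => (InnerProductSpace.toDual ℝ (EuclideanSpace ℝ (Fin n))).symm L) hfz
    have h2 : (InnerProductSpace.toDual ℝ (EuclideanSpace ℝ (Fin n))).symm (fderiv ℝ φ y) - v = 0 := by
      simpa using this
    exact h2
  refine ⟨y, by rwa [← sub_eq_zero], fun z => ?_⟩
  have := grad_ineq hconvh (hgh y) z
  rw [show gradient φ y - v = g from rfl, hg0, inner_zero_left, add_zero] at this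
  exact this

lemma legendre_package (φ : EuclideanSpace ℝ (Fin n) → ℝ) (hφ : ContDiff ℝ 2 φ)
    (hconv : StrictConvexOn ℝ Set.univ φ) (hleg : LegendreType φ) :
    ∃ Y : EuclideanSpace ℝ (Fin n) → EuclideanSpace ℝ (Fin n),
      Continuous Y ∧ (∀ v, gradient φ (Y v) = v) ∧
      (∀ v w, fenchel φ v + ⟪Y v, w - v⟫ ≤ fenchel φ w) ∧
      (∀ v, HasGradientAt (fenchel φ) (Y v) v) := by
  choose Y hYg hYmax using exists_min_grad φ hφ hconv hleg
  have hbdd : ∀ v : EuclideanSpace ℝ (Fin n),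
      BddAbove (Set.range fun z => ⟪v, z⟫ - φ z) := fun v =>
    ⟨⟪v, Y v⟫ - φ (Y v), by
      rintro r ⟨z, rfl⟩
      show ⟪v, z⟫ - φ z ≤ ⟪v, Y v⟫ - φ (Y v)
      have := hYmax v z
      linarith⟩
  have hfen : ∀ v, fenchel φ v = ⟪v, Y v⟫ - φ (Y v) := fun v => by
    refine le_antisymm (ciSup_le fun z => (by have := hYmax v z; linarith : ⟪v, z⟫ - φ z ≤ ⟪v, Y v⟫ - φ (Y v))) ?_
    exact le_ciSup (hbdd v) (Y v)
  have hsub : ∀ v w, fenchel φ v + ⟪Y v, w - v⟫ ≤ fenchel φ w := by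
    intro v w
    have h1 : ⟪w, Y v⟫ - φ (Y v) ≤ fenchel φ w := le_ciSup (hbdd w) (Y v)
    rw [hfen v, inner_sub_right]
    have e1 : ⟪Y v, w⟫ = ⟪w, Y v⟫ := real_inner_comm _ _
    have e2 : ⟪v, Y v⟫ = ⟪Y v, v⟫ := real_inner_comm _ _
    linarith
  have hgradcont : Continuous (gradient φ) := by
    have h1 : Continuous (fderiv ℝ φ) := (hφ.continuous_fderiv two_ne_zero)
    exact ((InnerProductSpace.toDual ℝ (EuclideanSpace ℝ (Fin n))).symm.continuous).comp h1
  have hinj : Function.Injective (gradient φ) :=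
    grad_injective hconv (hφ.differentiable two_ne_zero)
  have hYcont : Continuous Y := by
    rw [continuous_iff_continuousAt]
    intro v
    apply tendsto_of_subseq_tendsto
    intro ns hns
    have hnorm : Tendsto (fun k => ‖ns k‖) atTop (𝓝 ‖v‖) := hns.norm
    obtain ⟨M, hM⟩ := hnorm.bddAbove_range
    rw [mem_upperBounds] at hM
    have hMb : ∀ k, ‖ns k‖ ≤ M := fun k => hM _ ⟨k, rfl⟩
    have hev : ∀ᶠ z in cocompact (EuclideanSpace ℝ (Fin n)), M < ‖gradient φ z‖ :=
      hleg.eventually_gt_atTop M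
    rcases mem_cocompact.1 hev with ⟨K, hK, hKsub⟩
    have hmemK : ∀ k, Y (ns k) ∈ K := by
      intro k
      by_contra hcon
      have := hKsub hcon
      simp only [Set.mem_setOf_eq, hYg] at this
      exact absurd (hMb k) (not_le.2 this)
    obtain ⟨a, haK, ms, hms, hconv'⟩ := hK.tendsto_subseq hmemK
    refine ⟨ms, ?_⟩
    have hga : Tendsto (fun i => gradient φ (Y (ns (ms i)))) atTop (𝓝 (gradient φ a)) :=
      (hgradcont.tendsto a).comp hconv'
    simp only [hYg] at hga
    have hga' : Tendsto (fun i => ns (ms i)) atTop (𝓝 v) := hns.comp hms.tendsto_atTop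
    have hav : gradient φ a = v := tendsto_nhds_unique hga hga'
    have : a = Y v := hinj (by rw [hav, hYg])
    rw [← this]
    exact hconv'
  have hderiv : ∀ v, HasGradientAt (fenchel φ) (Y v) v := by
    intro v
    rw [hasGradientAt_iff_isLittleO, Asymptotics.isLittleO_iff]
    intro c hc
    have hevc : ∀ᶠ w in 𝓝 v, ‖Y w - Y v‖ < c := by
      have := Metric.tendsto_nhds.mp (hYcont.tendsto v) c hc
      simpa [dist_eq_norm] using this
    filter_upwards [hevc] with w hw
    have h1 : 0 ≤ fenchel φ w - fenchel φ v - ⟪Y v, w - v⟫ := by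
      have := hsub v w; linarith
    have h2 : fenchel φ w - fenchel φ v - ⟪Y v, w - v⟫ ≤ ⟪Y w - Y v, w - v⟫ := by
      have := hsub w v
      have e : ⟪Y w, v - w⟫ = -⟪Y w, w - v⟫ := by
        rw [← inner_neg_right]; congr 1; abel
      rw [inner_sub_left]
      rw [e] at this
      linarith
    rw [Real.norm_eq_abs, abs_of_nonneg h1]
    calc fenchel φ w - fenchel φ v - ⟪Y v, w - v⟫ ≤ ⟪Y w - Y v, w - v⟫ := h2
      _ ≤ ‖Y w - Y v‖ * ‖w - v‖ := real_inner_le_norm _ _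
      _ ≤ c * ‖w - v‖ := by
          apply mul_le_mul hw.le le_rfl (norm_nonneg _) hc.le
  exact ⟨Y, hYcont, hYg, hsub, hderiv⟩

lemma intervalIntegrable_inner {c u : ℝ → EuclideanSpace ℝ (Fin n)} (hc : Continuous c)
    {a b : ℝ} (hu : IntervalIntegrable u volume a b) :
    IntervalIntegrable (fun s => ⟪c s, u s⟫) volume a b := by
  rw [intervalIntegrable_iff] at hu ⊢
  obtain ⟨C, hC⟩ := isCompact_uIcc.exists_bound_of_continuousOn (hc.continuousOn (s := Set.uIcc a b))
  refine Integrable.mono' (hu.norm.const_mul C) ?_ ?_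
  · exact (hc.aestronglyMeasurable.restrict).inner hu.aestronglyMeasurable
  · refine (MeasureTheory.ae_restrict_iff' measurableSet_uIoc).2 (Eventually.of_forall fun s hs => ?_)
    have hsu : s ∈ Set.uIcc a b := Set.uIoc_subset_uIcc hs
    calc ‖⟪c s, u s⟫‖ ≤ ‖c s‖ * ‖u s‖ := by
          rw [Real.norm_eq_abs]; exact abs_real_inner_le_norm _ _
      _ ≤ C * ‖u s‖ := mul_le_mul (hC s hsu) le_rfl (norm_nonneg _)
          ((norm_nonneg (c s)).trans (hC s hsu))

lemma telescope_ineq (ψ : EuclideanSpace ℝ (Fin n) → ℝ)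
    (Y : EuclideanSpace ℝ (Fin n) → EuclideanSpace ℝ (Fin n)) (hY : Continuous Y)
    (hsub : ∀ v w, ψ v + ⟪Y v, w - v⟫ ≤ ψ w)
    (u : ℝ → EuclideanSpace ℝ (Fin n)) (hu : ∀ a b : ℝ, IntervalIntegrable u volume a b)
    (x₀ : EuclideanSpace ℝ (Fin n)) (t : ℝ) (ht : 0 ≤ t) :
    ∫ s in (0:ℝ)..t, ⟪Y (x₀ + ∫ τ in (0:ℝ)..s, u τ), u s⟫ ≤
      ψ (x₀ + ∫ τ in (0:ℝ)..t, u τ) - ψ x₀ := by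
  set X : ℝ → EuclideanSpace ℝ (Fin n) := fun s => x₀ + ∫ τ in (0:ℝ)..s, u τ with hX
  have hXcont : Continuous X :=
    continuous_const.add (intervalIntegral.continuous_primitive hu 0)
  have hX0 : X 0 = x₀ := by simp [hX]
  set G : ℝ → EuclideanSpace ℝ (Fin n) := fun s => Y (X s) with hG
  have hGcont : Continuous G := hY.comp hXcont
  have hGu : ∀ a b : ℝ, IntervalIntegrable (fun s => ⟪G s, u s⟫) volume a b :=
    fun a b => intervalIntegrable_inner hGcont (hu a b)
  have hXd : ∀ a b : ℝ, X b - X a = ∫ s in a..b, u s := by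
    intro a b
    simp only [hX]
    rw [add_sub_add_left_eq_sub]
    exact intervalIntegral.integral_interval_sub_left (hu 0 b) (hu 0 a)
  rcases eq_or_lt_of_le ht with rfl | htpos
  · simp
  refine le_of_forall_pos_le_add ?_
  intro ε hε
  set B : ℝ := (∫ s in (0:ℝ)..t, ‖u s‖) + 1 with hB
  have hint_norm_nonneg : 0 ≤ ∫ s in (0:ℝ)..t, ‖u s‖ :=
    intervalIntegral.integral_nonneg ht (fun s _ => norm_nonneg _)
  have hBpos : 0 < B := by rw [hB]; linarith
  set ε' : ℝ := ε / B with hε'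
  have hε'pos : 0 < ε' := div_pos hε hBpos
  -- uniform continuity of G on [0, t]
  have hUC := isCompact_Icc.uniformContinuousOn_of_continuous
    (hGcont.continuousOn (s := Set.Icc (0:ℝ) t))
  rw [Metric.uniformContinuousOn_iff] at hUC
  obtain ⟨δ, hδpos, hδ⟩ := hUC ε' hε'pos
  -- choose N
  obtain ⟨N, hN⟩ := exists_nat_gt (t / δ)
  have hNpos : 0 < (N:ℝ) := lt_trans (div_pos htpos hδpos) hN
  have hN0 : (N:ℝ) ≠ 0 := ne_of_gt hNpos
  have hmesh : t / N < δ := by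
    rw [div_lt_iff₀ hNpos]
    have h := mul_lt_mul_of_pos_right hN hδpos
    calc t = (t/δ) * δ := by field_simp
      _ < N * δ := h
      _ = δ * N := by ring
  have hmesh0 : 0 < t / N := div_pos htpos hNpos
  set p : ℕ → ℝ := fun i => i * (t / N) with hp
  have hp0 : p 0 = 0 := by simp [hp]
  have hpN : p N = t := by show (N:ℝ) * (t / N) = t; field_simp
  have hpmono : ∀ i j : ℕ, i ≤ j → p i ≤ p j := fun i j hij => by
    apply mul_le_mul_of_nonneg_right (by exact_mod_cast hij) hmesh0.le
  have hpmem : ∀ i : ℕ, i ≤ N → p i ∈ Set.Icc (0:ℝ) t := fun i hi =>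
    ⟨by rw [← hp0]; exact hpmono 0 i (Nat.zero_le i), by rw [← hpN]; exact hpmono i N hi⟩
  -- increment bound
  have increment : ∀ i : ℕ, i < N →
      ∫ s in p i..p (i+1), ⟪G s, u s⟫ ≤
        (ψ (X (p (i+1))) - ψ (X (p i))) + ε' * ∫ s in p i..p (i+1), ‖u s‖ := by
    intro i hi
    set a := p i with ha
    set b := p (i+1) with hb
    have hab : a ≤ b := hpmono i (i+1) (Nat.le_succ i)
    have hamem : a ∈ Set.Icc (0:ℝ) t := hpmem i hi.le
    have hbmem : b ∈ Set.Icc (0:ℝ) t := hpmem (i+1) hi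
    have hba : b - a = t / N := by
      simp only [ha, hb, hp]; push_cast; ring
    have hsplit : ∫ s in a..b, ⟪G s, u s⟫ =
        (∫ s in a..b, ⟪G a, u s⟫) + ∫ s in a..b, ⟪G s - G a, u s⟫ := by
      rw [← intervalIntegral.integral_add (intervalIntegrable_inner continuous_const (hu a b))
        (intervalIntegrable_inner (c := fun s => G s - G a) (hGcont.sub continuous_const) (hu a b))]
      apply intervalIntegral.integral_congr
      intro s _
      show ⟪G s, u s⟫ = ⟪G a, u s⟫ + ⟪G s - G a, u s⟫
      rw [inner_sub_left]
      ring
    have hconstpart : ∫ s in a..b, ⟪G a, u s⟫ = ⟪G a, X b - X a⟫ := by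
      rw [hXd a b, intervalIntegral.integral_of_le hab, intervalIntegral.integral_of_le hab]
      exact integral_inner (hu a b).1 (G a)
    have hsubpart : ⟪G a, X b - X a⟫ ≤ ψ (X b) - ψ (X a) := by
      have := hsub (X a) (X b); simp only [hG] at *; linarith
    have herr : ∫ s in a..b, ⟪G s - G a, u s⟫ ≤ ε' * ∫ s in a..b, ‖u s‖ := by
      rw [← intervalIntegral.integral_const_mul]
      apply intervalIntegral.integral_mono_on hab
        (intervalIntegrable_inner (hGcont.sub continuous_const) (hu a b))
        (((hu a b).norm).const_mul ε')
      intro s hs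
      have hsmem : s ∈ Set.Icc (0: ℝ) t :=
        ⟨hamem.1.trans hs.1, hs.2.trans hbmem.2⟩
      have hdist : dist s a < δ := by
        rw [Real.dist_eq, abs_of_nonneg (by linarith [hs.1] : (0:ℝ) ≤ s - a)]
        have := hs.2
        linarith [hba ▸ hmesh]
      have hGd : ‖G s - G a‖ ≤ ε' := by
        have := hδ s hsmem a hamem hdist
        rw [dist_eq_norm] at this
        exact this.le
      calc ⟪G s - G a, u s⟫ ≤ ‖G s - G a‖ * ‖u s‖ := real_inner_le_norm _ _
        _ ≤ ε' * ‖u s‖ := mul_le_mul hGd le_rfl (norm_nonneg _) hε'pos.le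
    calc ∫ s in a..b, ⟪G s, u s⟫
        = (∫ s in a..b, ⟪G a, u s⟫) + ∫ s in a..b, ⟪G s - G a, u s⟫ := hsplit
      _ ≤ (ψ (X b) - ψ (X a)) + ε' * ∫ s in a..b, ‖u s‖ := by
          rw [hconstpart]; exact add_le_add hsubpart herr
  -- sum up
  have hsum1 : ∑ i ∈ Finset.range N, ∫ s in p i..p (i+1), ⟪G s, u s⟫
      = ∫ s in (0:ℝ)..t, ⟪G s, u s⟫ := by
    rw [intervalIntegral.sum_integral_adjacent_intervals (fun i _ => hGu (p i) (p (i+1)))]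
    rw [hp0, hpN]
  have hsum2 : ∑ i ∈ Finset.range N, ∫ s in p i..p (i+1), ‖u s‖
      = ∫ s in (0:ℝ)..t, ‖u s‖ := by
    rw [intervalIntegral.sum_integral_adjacent_intervals (fun i _ => (hu (p i) (p (i+1))).norm)]
    rw [hp0, hpN]
  have hsum3 : ∑ i ∈ Finset.range N, (ψ (X (p (i+1))) - ψ (X (p i)))
      = ψ (X t) - ψ x₀ := by
    rw [Finset.sum_range_sub (fun i => ψ (X (p i)))]
    rw [hp0, hpN, hX0]
  have hfinal : ∫ s in (0:ℝ)..t, ⟪G s, u s⟫ ≤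
      (ψ (X t) - ψ x₀) + ε' * ∫ s in (0:ℝ)..t, ‖u s‖ := by
    rw [← hsum1, ← hsum2, ← hsum3, Finset.mul_sum, ← Finset.sum_add_distrib]
    exact Finset.sum_le_sum fun i hi => increment i (Finset.mem_range.1 hi)
  have herr2 : ε' * ∫ s in (0:ℝ)..t, ‖u s‖ ≤ ε := by
    rw [hε', div_mul_eq_mul_div, div_le_iff₀ hBpos]
    have : (∫ s in (0:ℝ)..t, ‖u s‖) ≤ B := by rw [hB]; linarith
    nlinarith
  calc ∫ s in (0:ℝ)..t, ⟪G s, u s⟫ ≤ (ψ (X t) - ψ x₀) + ε' * ∫ s in (0:ℝ)..t, ‖u s‖ := hfinal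
    _ ≤ (ψ (X t) - ψ x₀) + ε := by linarith

/-- along any trajectory of `ẋ = u` with `x(0) = x₀` (encoded as
`x(t) = x₀ + ∫₀ᵗ u`, the absolutely continuous solution with `ẋ = u` a.e.),
`∫₀ᵗ q(x(s), u(s)) ds ≥ V(x₀) − V(x(t))`. -/
theorem running_cost_lower_bound {n : ℕ} (f φ : EuclideanSpace ℝ (Fin n) → ℝ)
    (hf : ContDiff ℝ 1 f) (hfconv : StrictConvexOn ℝ Set.univ f)
    (ybar : EuclideanSpace ℝ (Fin n)) (hmin : ∀ z, f ybar ≤ f z)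
    (hfstar : ∀ v : EuclideanSpace ℝ (Fin n),
      BddAbove (Set.range fun z => ⟪v, z⟫ - f z))
    (hφ : ContDiff ℝ 2 φ) (hφconv : StrictConvexOn ℝ Set.univ φ)
    (hleg : LegendreType φ)
    (xbar : EuclideanSpace ℝ (Fin n)) (hxbar : xbar = gradient φ ybar)
    (V : EuclideanSpace ℝ (Fin n) → ℝ)
    (hV : V = fun x => bregman (fenchel φ) x xbar)
    (q : EuclideanSpace ℝ (Fin n) → EuclideanSpace ℝ (Fin n) → ℝ)
    (hq : q = fun x u => f (gradient (fenchel φ) x) + fenchel f (-u) + ⟪u, ybar⟫)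
    (x₀ : EuclideanSpace ℝ (Fin n)) (u x : ℝ → EuclideanSpace ℝ (Fin n))
    (hu : ∀ t : ℝ, IntervalIntegrable u volume 0 t)
    (hx : ∀ t : ℝ, 0 ≤ t → x t = x₀ + ∫ s in (0:ℝ)..t, u s)
    (hqint : ∀ t : ℝ, IntervalIntegrable (fun s => q (x s) (u s)) volume 0 t) :
    ∀ t : ℝ, 0 ≤ t → V x₀ - V (x t) ≤ ∫ s in (0:ℝ)..t, q (x s) (u s) := by
  intro t ht
  obtain ⟨Y, hYcont, hYg, hsub, hYderiv⟩ := legendre_package φ hφ hφconv hleg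
  have hgradfen : gradient (fenchel φ) = Y := gradient_eq hYderiv
  have hYbar : Y xbar = ybar := by
    apply grad_injective hφconv (hφ.differentiable two_ne_zero)
    rw [hYg, hxbar]
  have hu' : ∀ a b : ℝ, IntervalIntegrable u volume a b := fun a b =>
    (hu a).symm.trans (hu b)
  set X : ℝ → EuclideanSpace ℝ (Fin n) := fun s => x₀ + ∫ τ in (0:ℝ)..s, u τ with hX
  have hXcont : Continuous X :=
    continuous_const.add (intervalIntegral.continuous_primitive hu' 0)
  have hYXcont : Continuous fun s => Y (X s) := hYcont.comp hXcont
  have hxt : x t = X t := hx t ht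
  -- pointwise bound on the integrand
  have hpt : ∀ s : ℝ, s ∈ Set.Icc 0 t → ⟪ybar, u s⟫ - ⟪Y (X s), u s⟫ ≤ q (x s) (u s) := by
    intro s hs
    rw [hq, hx s hs.1, hgradfen]
    have hFY : ⟪-(u s), Y (X s)⟫ - f (Y (X s)) ≤ fenchel f (-(u s)) :=
      le_ciSup (hfstar (-(u s))) (Y (X s))
    have e1 : ⟪-(u s), Y (X s)⟫ = -⟪Y (X s), u s⟫ := by
      rw [inner_neg_left, real_inner_comm]
    have e2 : ⟪ybar, u s⟫ = ⟪u s, ybar⟫ := real_inner_comm _ _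
    rw [e1] at hFY
    show ⟪ybar, u s⟫ - ⟪Y (X s), u s⟫ ≤ f (Y (X s)) + fenchel f (-(u s)) + ⟪u s, ybar⟫
    linarith
  -- integrability of the lower bound
  have hW : IntervalIntegrable (fun s => ⟪ybar, u s⟫ - ⟪Y (X s), u s⟫) volume 0 t :=
    (intervalIntegrable_inner continuous_const (hu' 0 t)).sub
      (intervalIntegrable_inner hYXcont (hu' 0 t))
  have hmono : ∫ s in (0:ℝ)..t, (⟪ybar, u s⟫ - ⟪Y (X s), u s⟫) ≤
      ∫ s in (0:ℝ)..t, q (x s) (u s) :=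
    intervalIntegral.integral_mono_on ht hW (hqint t) hpt
  -- split the left integral
  have hsplit : ∫ s in (0:ℝ)..t, (⟪ybar, u s⟫ - ⟪Y (X s), u s⟫) =
      ⟪ybar, ∫ s in (0:ℝ)..t, u s⟫ - ∫ s in (0:ℝ)..t, ⟪Y (X s), u s⟫ := by
    rw [intervalIntegral.integral_sub (intervalIntegrable_inner continuous_const (hu' 0 t))
      (intervalIntegrable_inner hYXcont (hu' 0 t))]
    congr 1
    rw [intervalIntegral.integral_of_le ht, intervalIntegral.integral_of_le ht]
    exact integral_inner (hu' 0 t).1 ybar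
  -- telescoping bound
  have htel : ∫ s in (0:ℝ)..t, ⟪Y (X s), u s⟫ ≤ fenchel φ (X t) - fenchel φ x₀ :=
    telescope_ineq (fenchel φ) Y hYcont hsub u hu' x₀ t ht
  -- compute V
  have hVval : ∀ z, V z = fenchel φ z - fenchel φ xbar - ⟪ybar, z - xbar⟫ := by
    intro z
    rw [hV]
    show bregman (fenchel φ) z xbar = _
    rw [bregman, hgradfen, hYbar]
  have hVdiff : V x₀ - V (x t) =
      fenchel φ x₀ - fenchel φ (X t) + ⟪ybar, ∫ s in (0:ℝ)..t, u s⟫ := by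
    rw [hVval, hVval, hxt]
    have hXt : X t - x₀ = ∫ s in (0:ℝ)..t, u s := by simp [hX]
    rw [← hXt]
    have e : ⟪ybar, X t - x₀⟫ = ⟪ybar, X t - xbar⟫ - ⟪ybar, x₀ - xbar⟫ := by
      rw [← inner_sub_right]
      congr 1
      abel
    linarith [e]
  linarith [hmono, hsplit ▸ hmono]
end

section
/- Let f : ℝⁿ → ℝ be C¹ and strictly convex with unique global minimizer ȳ, φ : ℝⁿ → ℝ C², strictly convex, Legendre type, with conjugate φ*; set x̄ := ∇φ(ȳ), V(x) := D_{φ*}(x, x̄), q(x, u) := f(∇φ*(x)) + f*(−u) + ⟨u, ȳ⟩. Let x : [0, ∞) → ℝⁿ solve the mirror descent closed-loop system ẋ(t) = −∇f(∇φ*(x(t))), x(0) = x₀, and set u(t) := −∇f(∇φ*(x(t))). Then for every t ≥ 0, ∫₀ᵗ q(x(s), u(s)) ds = V(x₀) − V(x(t)). -/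
open scoped RealInnerProductSpace
open Filter MeasureTheory
open InnerProductSpace Topology

variable {n : ℕ}

lemma convex_first_order {h : EuclideanSpace ℝ (Fin n) → ℝ} {G p : EuclideanSpace ℝ (Fin n)}
    (hc : ConvexOn ℝ Set.univ h) (hg : HasGradientAt h G p) (y : EuclideanSpace ℝ (Fin n)) :
    h p + ⟪G, y - p⟫ ≤ h y := by
  have hF : HasFDerivAt h (toDual ℝ _ G) p := (hasGradientAt_iff_hasFDerivAt).mp hg
  set L : AffineMap ℝ ℝ (EuclideanSpace ℝ (Fin n)) := AffineMap.lineMap p y with hL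
  have hψc : ConvexOn ℝ Set.univ (h ∘ L) := by
    have := hc.comp_affineMap L
    simpa using this
  have hLd : HasDerivAt (fun t : ℝ => L t) (y - p) 0 := by
    have heq : (fun t : ℝ => L t) = fun t : ℝ => t • (y - p) + p := by
      funext t
      show AffineMap.lineMap p y t = _
      simp [AffineMap.lineMap_apply, vsub_eq_sub, vadd_eq_add]
    rw [heq]
    simpa using ((hasDerivAt_id (0:ℝ)).smul_const (y - p)).add_const p
  have hψd : HasDerivAt (h ∘ L) ⟪G, y - p⟫ 0 := by
    have hF' : HasFDerivAt h (toDual ℝ _ G) ((fun t : ℝ => L t) 0) := by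
      simpa [hL] using hF
    have := hF'.comp_hasDerivAt (x := (0:ℝ)) hLd
    simpa using this
  have hslope := hψc.le_slope_of_hasDerivAt (Set.mem_univ 0) (Set.mem_univ 1)
    (by norm_num) hψd
  have h0 : (h ∘ L) 0 = h p := by simp [hL]
  have h1 : (h ∘ L) 1 = h y := by simp [hL]
  rw [slope_def_field, h1, h0] at hslope
  have : ⟪G, y - p⟫ ≤ h y - h p := by simpa using hslope
  linarith

lemma fenchel_eq_of_gradient {h : EuclideanSpace ℝ (Fin n) → ℝ} {G p : EuclideanSpace ℝ (Fin n)}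
    (hc : ConvexOn ℝ Set.univ h) (hg : HasGradientAt h G p) :
    fenchel h G = ⟪G, p⟫ - h p := by
  have key : ∀ w, ⟪G, w⟫ - h w ≤ ⟪G, p⟫ - h p := by
    intro w
    have := convex_first_order hc hg w
    rw [inner_sub_right] at this
    linarith
  refine le_antisymm (ciSup_le key) ?_
  have hb : BddAbove (Set.range fun w => ⟪G, w⟫ - h w) := by
    refine ⟨⟪G, p⟫ - h p, ?_⟩
    rintro _ ⟨w, rfl⟩
    exact key w
  simpa [fenchel] using le_ciSup hb p

lemma inner_hasFDerivAt (v p : EuclideanSpace ℝ (Fin n)) :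
    HasFDerivAt (fun z : EuclideanSpace ℝ (Fin n) => ⟪v, z⟫) (toDual ℝ _ v) p := by
  exact (toDual ℝ (EuclideanSpace ℝ (Fin n)) v).hasFDerivAt (x := p)

lemma quad_hasFDerivAt (p : EuclideanSpace ℝ (Fin n)) :
    HasFDerivAt (fun z : EuclideanSpace ℝ (Fin n) => ⟪z, z⟫) (toDual ℝ _ ((2:ℝ) • p)) p := by
  have := (hasFDerivAt_id (𝕜 := ℝ) p).inner ℝ (hasFDerivAt_id p)
  refine this.congr_fderiv ?_
  ext w
  simp [fderivInnerCLM_apply, real_inner_comm, inner_smul_left, two_smul, inner_add_left]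

set_option maxHeartbeats 1000000 in

set_option maxHeartbeats 1000000 in
lemma exists_gradient_eq {φ : EuclideanSpace ℝ (Fin n) → ℝ} {g : EuclideanSpace ℝ (Fin n) → EuclideanSpace ℝ (Fin n)}
    (hφconv : ConvexOn ℝ Set.univ φ)
    (hgrad : ∀ p, HasGradientAt φ (g p) p)
    (hgcont : Continuous g)
    (hleg : Tendsto (fun z => ‖g z‖) (cocompact (EuclideanSpace ℝ (Fin n))) atTop)
    (v : EuclideanSpace ℝ (Fin n)) : ∃ z, g z = v := by
  set h : EuclideanSpace ℝ (Fin n) → ℝ := fun z => φ z - ⟪v, z⟫ with hh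
  have hgradh : ∀ p, HasGradientAt h (g p - v) p := by
    intro p
    rw [hasGradientAt_iff_hasFDerivAt, map_sub]
    exact ((hasGradientAt_iff_hasFDerivAt).mp (hgrad p)).sub (inner_hasFDerivAt v p)
  have hφdiff : Differentiable ℝ φ := fun p => (hgrad p).differentiableAt
  have hcont : Continuous h := hφdiff.continuous.sub (continuous_const.inner continuous_id)
  have hconv : ConvexOn ℝ Set.univ h := by
    refine ⟨convex_univ, fun x _ y _ a b ha hb hab => ?_⟩
    have h1 := hφconv.2 (Set.mem_univ x) (Set.mem_univ y) ha hb hab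
    simp only [hh, smul_eq_mul] at *
    rw [inner_add_right, real_inner_smul_right, real_inner_smul_right]
    linarith
  set K : ℝ := ‖g 0 - v‖ with hK
  have hlow : ∀ z, h 0 - K * ‖z‖ ≤ h z := by
    intro z
    have h1 := convex_first_order hconv (hgradh 0) z
    have h2 : |⟪g 0 - v, z - 0⟫| ≤ K * ‖z - 0‖ := abs_real_inner_le_norm _ _
    rw [sub_zero] at h1 h2
    have := neg_abs_le ⟪g 0 - v, z⟫
    linarith
  have H : ∀ k : ℕ, ∃ z : EuclideanSpace ℝ (Fin n), g z = v - (((k:ℝ)+1)⁻¹) • z ∧ ‖g z‖ ≤ ‖v‖ + K := by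
    intro k
    set ε : ℝ := ((k:ℝ)+1)⁻¹ with hε
    have hεpos : 0 < ε := by positivity
    set hk : EuclideanSpace ℝ (Fin n) → ℝ := fun z => h z + (ε/2) * ⟪z, z⟫ with hhk
    have hgradk : ∀ p : EuclideanSpace ℝ (Fin n), HasFDerivAt hk (toDual ℝ _ (g p - v + ε • p)) p := by
      intro p
      have h1 := ((hasGradientAt_iff_hasFDerivAt).mp (hgradh p)).add
        ((quad_hasFDerivAt p).const_mul (ε/2))
      refine h1.congr_fderiv ?_
      ext w
      simp [inner_smul_left, inner_add_left, inner_sub_left]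
      ring
    have hkcont : Continuous hk :=
      hcont.add (continuous_const.mul (continuous_id.inner continuous_id))
    have hcoer : Tendsto hk (cocompact (EuclideanSpace ℝ (Fin n))) atTop := by
      have hpoly : Tendsto (fun r : ℝ => r * ((ε/2) * r - K) + h 0) atTop atTop := by
        refine tendsto_atTop_add_const_right _ _ (tendsto_id.atTop_mul_atTop₀ ?_)
        exact tendsto_atTop_add_const_right _ _ (tendsto_id.const_mul_atTop (by positivity))
      refine tendsto_atTop_mono ?_ (hpoly.comp tendsto_norm_cocompact_atTop)
      intro z
      have h1 := hlow z
      have h2 : ⟪z, z⟫_ℝ = ‖z‖ ^ 2 := real_inner_self_eq_norm_sq z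
      simp only [Function.comp_apply, hhk]
      rw [h2]
      calc ‖z‖ * (ε / 2 * ‖z‖ - K) + h 0 = (h 0 - K * ‖z‖) + ε / 2 * ‖z‖ ^ 2 := by ring
      _ ≤ h z + ε / 2 * ‖z‖ ^ 2 := add_le_add_left (hlow z) _
    obtain ⟨z, hz⟩ := hkcont.exists_forall_le hcoer
    have hlocmin : IsLocalMin hk z := Filter.Eventually.of_forall hz
    have hzero := hlocmin.hasFDerivAt_eq_zero (hgradk z)
    have hveczero : g z - v + ε • z = 0 := by
      have := congrArg (toDual ℝ _).symm hzero
      simpa using this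
    have hgz : g z = v - ε • z := by
      rw [← sub_eq_zero, show g z - (v - ε • z) = g z - v + ε • z from by abel]
      exact hveczero
    refine ⟨z, hgz, ?_⟩
    -- bound ε‖z‖ ≤ K
    have hmono := convex_first_order hconv (hgradh z) 0
    have hinner : ⟪g z - v, 0 - z⟫ = ε * ⟪z, z⟫ := by
      rw [hgz]
      rw [show v - ε • z - v = -(ε • z) by abel, zero_sub, inner_neg_neg, real_inner_smul_left]
    rw [hinner] at hmono
    have hlz := hlow z
    have hnsq : ⟪z, z⟫_ℝ = ‖z‖ ^ 2 := real_inner_self_eq_norm_sq z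
    have hb : ε * ‖z‖ ≤ K := by
      rcases eq_or_lt_of_le (norm_nonneg z) with h0 | h0
      · rw [← h0, mul_zero]; positivity
      · have : ε * ‖z‖ ^ 2 ≤ K * ‖z‖ := by nlinarith
        nlinarith
    calc ‖g z‖ = ‖v - ε • z‖ := by rw [hgz]
    _ ≤ ‖v‖ + ‖ε • z‖ := norm_sub_le _ _
    _ ≤ ‖v‖ + K := by rw [norm_smul, Real.norm_eq_abs, abs_of_pos hεpos]; linarith
  choose zs hgzs hbound using H
  have hev : ∀ᶠ w in cocompact (EuclideanSpace ℝ (Fin n)), ‖v‖ + K < ‖g w‖ := hleg.eventually_gt_atTop _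
  obtain ⟨C, hCcomp, hsub⟩ := mem_cocompact.mp hev
  have hzsC : ∀ k, zs k ∈ C := by
    intro k
    by_contra hmem
    exact absurd (hbound k) (not_le.mpr (hsub hmem))
  obtain ⟨a, -, ms, hms, htend⟩ := hCcomp.tendsto_subseq hzsC
  refine ⟨a, ?_⟩
  have hεtend : Tendsto (fun k : ℕ => ((k:ℝ)+1)⁻¹) atTop (𝓝 0) := by
    simpa only [one_div] using tendsto_one_div_add_atTop_nhds_zero_nat (𝕜 := ℝ)
  have h1 : Tendsto (fun i => v - (((ms i : ℝ))+1)⁻¹ • zs (ms i)) atTop (𝓝 (v - (0:ℝ) • a)) :=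
    tendsto_const_nhds.sub ((hεtend.comp hms.tendsto_atTop).smul htend)
  have h2 : Tendsto (fun i => g (zs (ms i))) atTop (𝓝 (g a)) :=
    (hgcont.continuousAt.tendsto).comp htend
  have h3 : (fun i => g (zs (ms i))) = fun i => v - (((ms i : ℝ))+1)⁻¹ • zs (ms i) := by
    funext i; exact hgzs (ms i)
  rw [h3] at h2
  have := tendsto_nhds_unique h2 h1
  simpa using this

set_option maxHeartbeats 800000 in
lemma gradient_injective {φ : EuclideanSpace ℝ (Fin n) → ℝ} {g : EuclideanSpace ℝ (Fin n) → EuclideanSpace ℝ (Fin n)}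
    (hφconv : StrictConvexOn ℝ Set.univ φ)
    (hgrad : ∀ p, HasGradientAt φ (g p) p)
    {z₁ z₂ : EuclideanSpace ℝ (Fin n)} (heq : g z₁ = g z₂) : z₁ = z₂ := by
  by_contra hne
  have half : (0:ℝ) < 1/2 := one_half_pos
  set m : EuclideanSpace ℝ (Fin n) := (1/2 : ℝ) • z₁ + (1/2 : ℝ) • z₂ with hm
  set v := g z₁ with hv
  have hmin : ∀ z w : EuclideanSpace ℝ (Fin n), g z = v →
      φ z - ⟪v, z⟫ ≤ φ w - ⟪v, w⟫ := by
    intro z w hgz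
    have := convex_first_order hφconv.convexOn (hgrad z) w
    rw [hgz, inner_sub_right] at this
    linarith
  have h1 := hmin z₁ m rfl
  have h2 := hmin z₂ m heq.symm
  have hstrict : φ m < (1/2:ℝ) • φ z₁ + (1/2:ℝ) • φ z₂ := by
    rw [hm]
    exact hφconv.2 (Set.mem_univ z₁) (Set.mem_univ z₂) hne half half (by norm_num)
  have es1 : (1/2:ℝ) • φ z₁ = 1/2 * φ z₁ := smul_eq_mul _ _
  have es2 : (1/2:ℝ) • φ z₂ = 1/2 * φ z₂ := smul_eq_mul _ _
  have hin : ⟪v, m⟫ = (1/2) * ⟪v, z₁⟫ + (1/2) * ⟪v, z₂⟫ := by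
    rw [hm, inner_add_right, real_inner_smul_right, real_inner_smul_right]
  linarith

lemma inverse_continuous {g Z : EuclideanSpace ℝ (Fin n) → EuclideanSpace ℝ (Fin n)}
    (hgcont : Continuous g)
    (hleg : Tendsto (fun z => ‖g z‖) (cocompact (EuclideanSpace ℝ (Fin n))) atTop)
    (hZ : ∀ v, g (Z v) = v) (hZg : ∀ p, Z (g p) = p) :
    Continuous Z := by
  rw [continuous_iff_continuousAt]
  intro v
  apply tendsto_of_subseq_tendsto
  intro ns hns
  have hnorm : Tendsto (fun k => ‖ns k‖) atTop (𝓝 ‖v‖) := hns.norm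
  obtain ⟨B, hB⟩ := hnorm.bddAbove_range
  have hBmem : ∀ k, ‖ns k‖ ≤ B := fun k => hB ⟨k, rfl⟩
  have hev : ∀ᶠ w in cocompact (EuclideanSpace ℝ (Fin n)), B < ‖g w‖ :=
    hleg.eventually_gt_atTop B
  obtain ⟨C, hCcomp, hsub⟩ := mem_cocompact.mp hev
  have hmem : ∀ k, Z (ns k) ∈ C := by
    intro k
    by_contra hc
    have := hsub hc
    simp only [Set.mem_setOf_eq, hZ] at this
    exact absurd (hBmem k) (not_le.mpr this)
  obtain ⟨a, -, ms, hms, htend⟩ := hCcomp.tendsto_subseq hmem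
  refine ⟨ms, ?_⟩
  have h2 : Tendsto (fun i => g (Z (ns (ms i)))) atTop (𝓝 (g a)) :=
    (hgcont.continuousAt.tendsto).comp htend
  simp only [hZ] at h2
  have h3 : Tendsto (fun i => ns (ms i)) atTop (𝓝 v) := hns.comp hms.tendsto_atTop
  have hga : g a = v := tendsto_nhds_unique h2 h3
  have : a = Z v := by rw [← hga, hZg]
  rwa [this] at htend

lemma fenchel_hasGradientAt {φ : EuclideanSpace ℝ (Fin n) → ℝ}
    {Z : EuclideanSpace ℝ (Fin n) → EuclideanSpace ℝ (Fin n)}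
    (hφconv : StrictConvexOn ℝ Set.univ φ)
    (hgradZ : ∀ w, HasGradientAt φ w (Z w))
    (hZcont : Continuous Z) (v : EuclideanSpace ℝ (Fin n)) :
    HasGradientAt (fenchel φ) (Z v) v := by
  have hF : ∀ w, fenchel φ w = ⟪w, Z w⟫ - φ (Z w) := fun w =>
    fenchel_eq_of_gradient hφconv.convexOn (hgradZ w)
  have hbdd : ∀ w, BddAbove (Set.range fun z => ⟪w, z⟫ - φ z) := by
    intro w
    refine ⟨⟪w, Z w⟫ - φ (Z w), ?_⟩
    rintro _ ⟨z, rfl⟩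
    have := convex_first_order hφconv.convexOn (hgradZ w) z
    rw [inner_sub_right] at this
    show ⟪w, z⟫_ℝ - φ z ≤ ⟪w, Z w⟫_ℝ - φ (Z w)
    linarith
  have hlow : ∀ w, fenchel φ v + ⟪Z v, w - v⟫ ≤ fenchel φ w := by
    intro w
    have h1 : ⟪w, Z v⟫ - φ (Z v) ≤ fenchel φ w := le_ciSup (hbdd w) (Z v)
    have e1 : ⟪Z v, w - v⟫_ℝ = ⟪Z v, w⟫_ℝ - ⟪Z v, v⟫_ℝ := inner_sub_right _ _ _
    have e3 : ⟪Z v, w⟫_ℝ = ⟪w, Z v⟫_ℝ := real_inner_comm _ _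
    have e4 : ⟪Z v, v⟫_ℝ = ⟪v, Z v⟫_ℝ := real_inner_comm _ _
    rw [hF v]
    linarith
  have hup : ∀ w, fenchel φ w - fenchel φ v - ⟪Z v, w - v⟫ ≤ ⟪w - v, Z w - Z v⟫ := by
    intro w
    have h1 : ⟪v, Z w⟫ - φ (Z w) ≤ fenchel φ v := le_ciSup (hbdd v) (Z w)
    have e1 : ⟪Z v, w - v⟫_ℝ = ⟪Z v, w⟫_ℝ - ⟪Z v, v⟫_ℝ := inner_sub_right _ _ _
    have e2 : ⟪w - v, Z w - Z v⟫_ℝ = ⟪w, Z w⟫_ℝ - ⟪w, Z v⟫_ℝ - ⟪v, Z w⟫_ℝ + ⟪v, Z v⟫_ℝ := by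
      rw [inner_sub_left, inner_sub_right, inner_sub_right]
      ring
    have e3 : ⟪Z v, w⟫_ℝ = ⟪w, Z v⟫_ℝ := real_inner_comm _ _
    have e4 : ⟪Z v, v⟫_ℝ = ⟪v, Z v⟫_ℝ := real_inner_comm _ _
    rw [hF w]
    linarith
  rw [hasGradientAt_iff_isLittleO, Asymptotics.isLittleO_iff]
  intro c hc
  have hcont2 : Tendsto (fun w => ‖Z w - Z v‖) (𝓝 v) (𝓝 0) := by
    have : Tendsto (fun w => ‖Z w - Z v‖) (𝓝 v) (𝓝 ‖Z v - Z v‖) :=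
      ((hZcont.sub continuous_const).norm).continuousAt
    simpa using this
  have hev : ∀ᶠ w in 𝓝 v, ‖Z w - Z v‖ < c := hcont2.eventually_lt_const hc
  filter_upwards [hev] with w hw
  have hd : ‖Z w - Z v‖ ≤ c := le_of_lt hw
  have h0 : 0 ≤ fenchel φ w - fenchel φ v - ⟪Z v, w - v⟫ := by
    have := hlow w; linarith
  have habs : ‖fenchel φ w - fenchel φ v - ⟪Z v, w - v⟫‖ = fenchel φ w - fenchel φ v - ⟪Z v, w - v⟫ := by
    rw [Real.norm_eq_abs, abs_of_nonneg h0]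
  rw [habs]
  calc fenchel φ w - fenchel φ v - ⟪Z v, w - v⟫ ≤ ⟪w - v, Z w - Z v⟫ := hup w
  _ ≤ ‖w - v‖ * ‖Z w - Z v‖ := real_inner_le_norm _ _
  _ ≤ ‖w - v‖ * c := mul_le_mul_of_nonneg_left hd (norm_nonneg (w - v))
  _ = c * ‖w - v‖ := mul_comm _ _

/-- along the mirror-descent closed loop `ẋ = −∇f(∇φ*(x))`, with
`u(t) = −∇f(∇φ*(x(t)))`, the running cost satisfies
`∫₀ᵗ q(x(s), u(s)) ds = V(x₀) − V(x(t))` for all `t ≥ 0`. -/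
theorem mirror_descent_cost_identity {n : ℕ} (f φ : EuclideanSpace ℝ (Fin n) → ℝ)
    (hf : ContDiff ℝ 1 f) (hfconv : StrictConvexOn ℝ Set.univ f)
    (ybar : EuclideanSpace ℝ (Fin n)) (hmin : ∀ z, f ybar ≤ f z)
    (hφ : ContDiff ℝ 2 φ) (hφconv : StrictConvexOn ℝ Set.univ φ)
    (hleg : LegendreType φ)
    (xbar : EuclideanSpace ℝ (Fin n)) (hxbar : xbar = gradient φ ybar)
    (V : EuclideanSpace ℝ (Fin n) → ℝ)
    (hV : V = fun x => bregman (fenchel φ) x xbar)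
    (q : EuclideanSpace ℝ (Fin n) → EuclideanSpace ℝ (Fin n) → ℝ)
    (hq : q = fun x u => f (gradient (fenchel φ) x) + fenchel f (-u) + ⟪u, ybar⟫)
    (x₀ : EuclideanSpace ℝ (Fin n)) (x : ℝ → EuclideanSpace ℝ (Fin n))
    (hx0 : x 0 = x₀)
    (hode : ∀ t : ℝ, 0 ≤ t →
      HasDerivAt x (-gradient f (gradient (fenchel φ) (x t))) t) :
    ∀ t : ℝ, 0 ≤ t →
      ∫ s in (0:ℝ)..t, q (x s) (-gradient f (gradient (fenchel φ) (x s)))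
        = V x₀ - V (x t) := by
  intro t ht
  -- differentiability setup
  have hφdiff : Differentiable ℝ φ := hφ.differentiable (by norm_num)
  have hgradφ : ∀ p, HasGradientAt φ (gradient φ p) p := fun p => (hφdiff p).hasGradientAt
  have hgφcont : Continuous (gradient φ) := by
    have h1 : Continuous (fderiv ℝ φ) := hφ.continuous_fderiv (by norm_num)
    exact (toDual ℝ (EuclideanSpace ℝ (Fin n))).symm.continuous.comp h1
  have hfdiff : Differentiable ℝ f := hf.differentiable (by norm_num)
  have hgradf : ∀ p, HasGradientAt f (gradient f p) p := fun p => (hfdiff p).hasGradientAt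
  have hgfcont : Continuous (gradient f) := by
    have h1 : Continuous (fderiv ℝ f) := hf.continuous_fderiv (by norm_num)
    exact (toDual ℝ (EuclideanSpace ℝ (Fin n))).symm.continuous.comp h1
  -- inverse of the gradient map
  choose Z hZ using fun v => exists_gradient_eq hφconv.convexOn hgradφ hgφcont hleg v
  have hZg : ∀ p, Z (gradient φ p) = p := fun p =>
    gradient_injective hφconv hgradφ (by rw [hZ])
  have hZcont : Continuous Z := inverse_continuous hgφcont hleg hZ hZg
  have hgradZ : ∀ w, HasGradientAt φ w (Z w) := by
    intro w
    have := hgradφ (Z w)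
    rwa [hZ] at this
  have hZgrad : ∀ v, HasGradientAt (fenchel φ) (Z v) v :=
    fenchel_hasGradientAt hφconv hgradZ hZcont
  have hgradfen : gradient (fenchel φ) = Z := funext fun v => (hZgrad v).gradient
  have hZxbar : Z xbar = ybar := by rw [hxbar, hZg]
  -- gradient of V
  have hVfd : ∀ p, HasFDerivAt V (toDual ℝ (EuclideanSpace ℝ (Fin n)) (Z p - ybar)) p := by
    intro p
    have h1 : HasFDerivAt (fenchel φ) (toDual ℝ (EuclideanSpace ℝ (Fin n)) (Z p)) p :=
      (hasGradientAt_iff_hasFDerivAt).mp (hZgrad p)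
    have h2 : HasFDerivAt (fun w : EuclideanSpace ℝ (Fin n) => ⟪ybar, w⟫)
        (toDual ℝ (EuclideanSpace ℝ (Fin n)) ybar) p := inner_hasFDerivAt ybar p
    have h3 := (h1.sub_const (fenchel φ xbar)).sub (h2.sub_const ⟪ybar, xbar⟫)
    rw [map_sub]
    have hVeq : V = fun w => fenchel φ w - fenchel φ xbar - (⟪ybar, w⟫ - ⟪ybar, xbar⟫) := by
      rw [hV]
      funext w
      rw [bregman, hgradfen, hZxbar, inner_sub_right]
    rw [hVeq]
    exact h3
  -- pointwise identity for the running cost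
  have qid : ∀ p, q p (-(gradient f (Z p))) = ⟪gradient f (Z p), Z p⟫ - ⟪gradient f (Z p), ybar⟫ := by
    intro p
    rw [hq]
    simp only [neg_neg, hgradfen]
    have hfen : fenchel f (gradient f (Z p)) = ⟪gradient f (Z p), Z p⟫ - f (Z p) :=
      fenchel_eq_of_gradient hfconv.convexOn (hgradf (Z p))
    rw [hfen]
    have : ⟪-(gradient f (Z p)), ybar⟫_ℝ = -⟪gradient f (Z p), ybar⟫_ℝ := inner_neg_left _ _
    rw [this]
    ring
  -- derivative of -V ∘ x on the interval
  have hderiv : ∀ s ∈ Set.uIcc (0:ℝ) t, HasDerivAt (fun r => -V (x r))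
      (q (x s) (-(gradient f (Z (x s))))) s := by
    intro s hs
    rw [Set.uIcc_of_le ht] at hs
    have hxd := hode s hs.1
    rw [hgradfen] at hxd
    have h3 := (hVfd (x s)).comp_hasDerivAt s hxd
    have h4 := h3.neg
    refine h4.congr_deriv ?_
    rw [qid]
    have h5 : (toDual ℝ (EuclideanSpace ℝ (Fin n)) (Z (x s) - ybar))
        (-(gradient f (Z (x s)))) = ⟪Z (x s) - ybar, -(gradient f (Z (x s)))⟫_ℝ :=
      InnerProductSpace.toDual_apply_apply
    rw [h5, inner_neg_right, inner_sub_left,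
      real_inner_comm (Z (x s)) (gradient f (Z (x s))),
      real_inner_comm ybar (gradient f (Z (x s)))]
    ring
  -- integrability of the integrand
  have hxc : ContinuousOn x (Set.uIcc (0:ℝ) t) := by
    intro s hs
    rw [Set.uIcc_of_le ht] at hs
    exact (hode s hs.1).continuousAt.continuousWithinAt
  have hwcont : Continuous fun p : EuclideanSpace ℝ (Fin n) =>
      ⟪gradient f (Z p), Z p⟫_ℝ - ⟪gradient f (Z p), ybar⟫_ℝ :=
    ((hgfcont.comp hZcont).inner hZcont).sub ((hgfcont.comp hZcont).inner continuous_const)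
  have hint : IntervalIntegrable (fun s => q (x s) (-(gradient f (Z (x s))))) volume 0 t := by
    apply ContinuousOn.intervalIntegrable
    have heq : (fun s => q (x s) (-(gradient f (Z (x s))))) = fun s =>
        ⟪gradient f (Z (x s)), Z (x s)⟫_ℝ - ⟪gradient f (Z (x s)), ybar⟫_ℝ := by
      funext s
      rw [qid]
    rw [heq]
    exact hwcont.comp_continuousOn hxc
  have hFTC := intervalIntegral.integral_eq_sub_of_hasDerivAt hderiv hint
  rw [hgradfen]
  rw [hFTC, hx0]
  ring
end

section
/- Let f : ℝⁿ → ℝ be C¹ and strictly convex with unique global minimizer ȳ, φ : ℝⁿ → ℝ C², strictly convex, Legendre type, with conjugate φ*; set x̄ := ∇φ(ȳ) and V(x) := D_{φ*}(x, x̄). Let x : [0, ∞) → ℝⁿ solve ẋ(t) = −∇f(∇φ*(x(t))) and set y(t) := ∇φ*(x(t)). Then for all t ≥ 0, (d/dt) V(x(t)) ≤ f(ȳ) − f(y(t)) ≤ 0, and the first inequality is strict (i.e., (d/dt)V(x(t)) < 0) whenever x(t) ≠ x̄. -/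
open scoped RealInnerProductSpace
open Filter MeasureTheory

variable {n : ℕ}
local notation "E" => EuclideanSpace ℝ (Fin n)

-- helper: from HasFDerivAt with pointwise inner representation, get HasGradientAt
lemma hasGradientAt_of_eq {f : E → ℝ} {f' : E →L[ℝ] ℝ} {g x : E}
    (h : HasFDerivAt f f' x) (hg : ∀ z, f' z = ⟪g, z⟫) : HasGradientAt f g x := by
  have : f' = InnerProductSpace.toDual ℝ E g := by
    ext z; simp [hg z, InnerProductSpace.toDual_apply_apply]
  exact hasGradientAt_iff_hasFDerivAt.mpr (this ▸ h)

-- gradient inequality, non-strict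
lemma grad_ineq_s6 {f : E → ℝ} (hf : Differentiable ℝ f) (hc : ConvexOn ℝ Set.univ f)
    (a b : E) : ⟪gradient f a, b - a⟫ ≤ f b - f a := by
  set c := b - a with hc'
  have curve : ∀ t : ℝ, HasDerivAt (fun t : ℝ => a + t • c) c t := by
    intro t
    simpa using ((hasDerivAt_id t).smul_const c).const_add a
  have hg : ∀ t : ℝ, HasDerivAt (fun t : ℝ => f (a + t • c))
      ⟪gradient f (a + t • c), c⟫ t := by
    intro t
    have hF := ((hf (a + t • c)).hasGradientAt.hasFDerivAt).comp_hasDerivAt t (curve t)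
    simpa [InnerProductSpace.toDual_apply_apply, Function.comp_def] using hF
  have hconv : ConvexOn ℝ Set.univ (fun t : ℝ => f (a + t • c)) := by
    have haff : ConvexOn ℝ ((AffineMap.lineMap a b : ℝ →ᵃ[ℝ] E) ⁻¹' Set.univ)
        (f ∘ (AffineMap.lineMap a b : ℝ →ᵃ[ℝ] E)) := hc.comp_affineMap _
    have : ∀ t : ℝ, f (a + t • c) = (f ∘ (AffineMap.lineMap a b : ℝ →ᵃ[ℝ] E)) t := by
      intro t
      simp only [Function.comp, AffineMap.lineMap_apply_module, hc']
      congr 1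
      module
    simpa [Set.preimage_univ, funext this] using haff
  have h01 : (0:ℝ) < 1 := one_pos
  have hslope := hconv.le_slope_of_hasDerivAt (Set.mem_univ (0:ℝ)) (Set.mem_univ (1:ℝ)) h01 (by simpa using hg 0)
  have hab : a + c = b := by rw [hc']; abel
  simpa [slope_def_field, hab] using hslope

-- strict gradient inequality
lemma grad_ineq_strict {f : E → ℝ} (hf : Differentiable ℝ f)
    (hc : StrictConvexOn ℝ Set.univ f) {a b : E} (hab : a ≠ b) :
    ⟪gradient f a, b - a⟫ < f b - f a := by
  set m : E := (1/2 : ℝ) • a + (1/2 : ℝ) • b with hm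
  have hmid : f m < (1/2 : ℝ) * f a + (1/2 : ℝ) * f b :=
    hc.2 (Set.mem_univ a) (Set.mem_univ b) hab (by norm_num) (by norm_num) (by norm_num)
  have hma : m - a = (1/2 : ℝ) • (b - a) := by rw [hm]; module
  have h1 : ⟪gradient f a, m - a⟫ ≤ f m - f a := grad_ineq_s6 hf hc.convexOn a m
  rw [hma, real_inner_smul_right] at h1
  linarith

-- strict monotonicity, hence injectivity of the gradient
lemma grad_injective_s6 {f : E → ℝ} (hf : Differentiable ℝ f)
    (hc : StrictConvexOn ℝ Set.univ f) : Function.Injective (gradient f) := by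
  intro a b hgab
  by_contra hab
  have h1 := grad_ineq_strict hf hc hab
  have h2 := grad_ineq_strict hf hc (Ne.symm hab)
  rw [hgab] at h1
  have : ⟪gradient f b, a - b⟫ = - ⟪gradient f b, b - a⟫ := by
    rw [← inner_neg_right]; congr 1; abel
  rw [this] at h2
  linarith

set_option maxHeartbeats 1000000 in
lemma grad_surjective {φ : E → ℝ} (hφ : ContDiff ℝ 2 φ) (hc : StrictConvexOn ℝ Set.univ φ)
    (hleg : Tendsto (fun z => ‖gradient φ z‖) (cocompact (EuclideanSpace ℝ (Fin n))) atTop) :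
    Function.Surjective (gradient φ) := by
  have hdiff : Differentiable ℝ φ := hφ.differentiable two_ne_zero
  have hcontT : Continuous (gradient φ) :=
    (InnerProductSpace.toDual ℝ E).symm.continuous.comp (hφ.continuous_fderiv two_ne_zero)
  have hproper : IsProperMap (gradient φ) :=
    isProperMap_iff_tendsto_cocompact.mpr ⟨hcontT,
      tendsto_cocompact_of_tendsto_dist_comp_atTop 0 (by simpa [dist_zero_right] using hleg)⟩
  intro v
  set T := gradient φ with hT
  set C₂ : ℝ := ‖v - T 0‖ with hC₂
  set M : ℝ := ‖v‖ + C₂ with hM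
  -- compact set containing all points with small gradient
  obtain ⟨K, hKc, hKs⟩ := Filter.mem_cocompact.mp (hleg.eventually (eventually_gt_atTop M))
  obtain ⟨R', hR'⟩ := hKc.isBounded.subset_closedBall 0
  set R : ℝ := max R' 0 with hRdef
  have hR0 : 0 ≤ R := le_max_right _ _
  have hKR : K ⊆ Metric.closedBall 0 R :=
    hR'.trans (Metric.closedBall_subset_closedBall (le_max_left _ _))
  -- key approximation step
  have key : ∀ ε : ℝ, 0 < ε → ∃ z : E, T z + ε • z = v ∧ ‖z‖ ≤ R := by
    intro ε hε
    set C : ℝ := ‖T 0‖ + ‖v‖ with hCdef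
    set F : E → ℝ := fun z => φ z + (ε/2) * ⟪z, z⟫ - ⟪v, z⟫ with hF
    have hFcont : Continuous F := by
      apply Continuous.sub
      · exact hφ.continuous.add (continuous_const.mul (continuous_id.inner continuous_id))
      · exact continuous_const.inner continuous_id
    have hlow : ∀ z : E, (ε/2) * ‖z‖^2 - C * ‖z‖ + φ 0 ≤ F z := by
      intro z
      have h1 : ⟪T 0, z - 0⟫ ≤ φ z - φ 0 := grad_ineq_s6 hdiff hc.convexOn 0 z
      rw [sub_zero] at h1
      have h2 : |⟪T 0, z⟫| ≤ ‖T 0‖ * ‖z‖ := abs_real_inner_le_norm _ _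
      have h3 : |⟪v, z⟫| ≤ ‖v‖ * ‖z‖ := abs_real_inner_le_norm _ _
      have h4 : ⟪z, z⟫ = ‖z‖^2 := real_inner_self_eq_norm_sq z
      have h2' := abs_le.mp h2
      have h3' := abs_le.mp h3
      simp only [hF, hCdef]
      nlinarith
    have hq : Tendsto (fun r : ℝ => (ε/2) * r^2 - C * r + φ 0) atTop atTop := by
      have h1 : Tendsto (fun r : ℝ => (ε/2) * r + -C) atTop atTop :=
        tendsto_atTop_add_const_right _ (-C) (tendsto_id.const_mul_atTop (half_pos hε))
      have h2 : Tendsto (fun r : ℝ => r * ((ε/2) * r + -C)) atTop atTop :=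
        Filter.Tendsto.atTop_mul_atTop₀ tendsto_id h1
      have h3 := tendsto_atTop_add_const_right _ (φ 0) h2
      exact h3.congr (fun r => by ring)
    have hcoF : Tendsto F (cocompact (EuclideanSpace ℝ (Fin n))) atTop :=
      tendsto_atTop_mono hlow (hq.comp tendsto_norm_cocompact_atTop)
    obtain ⟨z, hz⟩ := hFcont.exists_forall_le hcoF
    -- gradient of F at z
    have hB : HasFDerivAt (fun w : E => ⟪w, w⟫)
        ((fderivInnerCLM ℝ (z, z)).comp ((ContinuousLinearMap.id ℝ E).prod
          (ContinuousLinearMap.id ℝ E))) z :=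
      (hasFDerivAt_id z).inner ℝ (hasFDerivAt_id z)
    have hC : HasFDerivAt (fun w : E => ⟪v, w⟫) (innerSL ℝ v) z := (innerSL ℝ v).hasFDerivAt
    have hA : HasFDerivAt φ (InnerProductSpace.toDual ℝ E (T z)) z :=
      (hdiff z).hasGradientAt.hasFDerivAt
    have hFgrad : HasGradientAt F (T z + ε • z - v) z := by
      apply hasGradientAt_of_eq (((hA.add (hB.const_mul (ε/2))).sub hC))
      intro w
      simp [fderivInnerCLM_apply, InnerProductSpace.toDual_apply_apply, inner_add_left,
        real_inner_smul_left, inner_sub_left, real_inner_comm z w]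
      ring
    have hlocal : IsLocalMin F z := Filter.Eventually.of_forall hz
    have h0 : InnerProductSpace.toDual ℝ E (T z + ε • z - v) = 0 :=
      hlocal.hasFDerivAt_eq_zero hFgrad.hasFDerivAt
    have hz0 : T z + ε • z - v = 0 := by
      rw [← map_zero (InnerProductSpace.toDual ℝ E)] at h0
      exact (InnerProductSpace.toDual ℝ E).injective h0
    have heq : T z + ε • z = v := by
      rw [sub_eq_zero] at hz0; exact hz0
    refine ⟨z, heq, ?_⟩
    -- bound ‖z‖ ≤ R
    have h1 : ⟪T 0, z - 0⟫ ≤ φ z - φ 0 := grad_ineq_s6 hdiff hc.convexOn 0 z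
    have h2 : ⟪T z, (0:E) - z⟫ ≤ φ 0 - φ z := grad_ineq_s6 hdiff hc.convexOn z 0
    have h2' : -⟪T z, z⟫ ≤ φ 0 - φ z := by
      rw [← inner_neg_right]
      simpa using h2
    rw [sub_zero] at h1
    have hTz : T z = v - ε • z := by rw [← heq]; abel
    have hmono : ε * ⟪z, z⟫ ≤ ⟪v - T 0, z⟫ := by
      have : ⟪T 0, z⟫ ≤ ⟪T z, z⟫ := by linarith
      rw [hTz, inner_sub_left, real_inner_smul_left] at this
      rw [inner_sub_left]
      linarith
    have hcs : ⟪v - T 0, z⟫ ≤ C₂ * ‖z‖ := real_inner_le_norm _ _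
    have hεz : ε * ‖z‖ ≤ C₂ := by
      rcases eq_or_lt_of_le (norm_nonneg z) with hz0' | hz0'
      · rw [← hz0']
        simpa [hC₂] using norm_nonneg (v - T 0)
      · have h5 : ε * ‖z‖^2 ≤ C₂ * ‖z‖ := by
          rw [← real_inner_self_eq_norm_sq]; linarith
        have := le_of_mul_le_mul_right (by nlinarith : (ε * ‖z‖) * ‖z‖ ≤ C₂ * ‖z‖) hz0'
        exact this
    have hTznorm : ‖T z‖ ≤ M := by
      rw [hTz]
      calc ‖v - ε • z‖ ≤ ‖v‖ + ‖ε • z‖ := norm_sub_le _ _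
        _ ≤ ‖v‖ + C₂ := by
            rw [norm_smul, Real.norm_eq_abs, abs_of_pos hε]
            linarith
    have hzK : z ∈ K := by
      by_contra hzK
      exact absurd hTznorm (not_le.mpr (hKs hzK))
    have := hKR hzK
    simpa [Metric.mem_closedBall, dist_zero_right] using this
  -- v is in the closure of the range
  have hclosed : IsClosed (Set.range T) := hproper.isClosedMap.isClosed_range
  have hmem : v ∈ closure (Set.range T) := by
    rw [Metric.mem_closure_iff]
    intro δ hδ
    obtain ⟨z, heq, hzR⟩ := key (δ / (R + 1)) (div_pos hδ (by linarith))
    refine ⟨T z, Set.mem_range_self z, ?_⟩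
    have : v - T z = (δ / (R + 1)) • z := by rw [← heq]; abel
    rw [dist_eq_norm, this, norm_smul, Real.norm_eq_abs,
      abs_of_pos (div_pos hδ (by linarith))]
    calc δ / (R + 1) * ‖z‖ ≤ δ / (R + 1) * R := by
          apply mul_le_mul_of_nonneg_left hzR (le_of_lt (div_pos hδ (by linarith)))
      _ < δ := by
          rw [div_mul_eq_mul_div, div_lt_iff₀ (by linarith : (0:ℝ) < R + 1)]
          nlinarith
  rw [hclosed.closure_eq] at hmem
  exact hmem

set_option maxHeartbeats 1000000 in
lemma fenchel_package {φ : E → ℝ} (hφ : ContDiff ℝ 2 φ) (hc : StrictConvexOn ℝ Set.univ φ)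
    (hleg : Tendsto (fun z => ‖gradient φ z‖) (cocompact (EuclideanSpace ℝ (Fin n))) atTop) :
    ∃ g : E → E, Function.Injective g ∧ (∀ w, gradient φ (g w) = w) ∧
      (∀ z, g (gradient φ z) = z) ∧ (∀ w, HasGradientAt (fenchel φ) (g w) w) := by
  have hdiff : Differentiable ℝ φ := hφ.differentiable two_ne_zero
  have hcontT : Continuous (gradient φ) :=
    (InnerProductSpace.toDual ℝ E).symm.continuous.comp (hφ.continuous_fderiv two_ne_zero)
  have hproper : IsProperMap (gradient φ) :=
    isProperMap_iff_tendsto_cocompact.mpr ⟨hcontT,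
      tendsto_cocompact_of_tendsto_dist_comp_atTop 0 (by simpa [dist_zero_right] using hleg)⟩
  have hbij : Function.Bijective (gradient φ) :=
    ⟨grad_injective_s6 hdiff hc, grad_surjective hφ hc hleg⟩
  have hhomeo : IsHomeomorph (gradient φ) :=
    isHomeomorph_iff_continuous_isClosedMap_bijective.mpr ⟨hcontT, hproper.isClosedMap, hbij⟩
  obtain ⟨e, he⟩ := isHomeomorph_iff_exists_homeomorph.mp hhomeo
  set g : E → E := ⇑e.symm with hgdef
  have hg1 : ∀ w, gradient φ (g w) = w := by
    intro w; rw [← he]; exact e.apply_symm_apply w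
  have hg2 : ∀ z, g (gradient φ z) = z := by
    intro z; rw [← he]; exact e.symm_apply_apply z
  have hgc : Continuous g := e.symm.continuous
  have hginj : Function.Injective g := e.symm.injective
  -- the sup in the conjugate is attained at g w
  have hub : ∀ w z : E, ⟪w, z⟫ - φ z ≤ ⟪w, g w⟫ - φ (g w) := by
    intro w z
    have h := grad_ineq_s6 hdiff hc.convexOn (g w) z
    rw [hg1 w, inner_sub_right] at h
    linarith
  have hbdd : ∀ w : E, BddAbove (Set.range fun z : E => ⟪w, z⟫ - φ z) := by
    intro w
    refine ⟨⟪w, g w⟫ - φ (g w), ?_⟩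
    rintro r ⟨z, rfl⟩
    exact hub w z
  have hsup : ∀ w, fenchel φ w = ⟪w, g w⟫ - φ (g w) := by
    intro w
    exact le_antisymm (ciSup_le (hub w)) (le_ciSup (hbdd w) (g w))
  refine ⟨g, hginj, hg1, hg2, ?_⟩
  intro w
  rw [hasGradientAt_iff_hasFDerivAt, hasFDerivAt_iff_isLittleO, Asymptotics.isLittleO_iff]
  intro c hc0
  have hev : ∀ᶠ w' in nhds w, ‖g w' - g w‖ ≤ c := by
    have h1 := (hgc.tendsto w).eventually (Metric.closedBall_mem_nhds (g w) hc0)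
    filter_upwards [h1] with w' hw'
    simpa [Metric.mem_closedBall, dist_eq_norm] using hw'
  filter_upwards [hev] with w' hw'
  have hA : ⟪w, g w' - g w⟫ ≤ φ (g w') - φ (g w) := by
    have h := grad_ineq_s6 hdiff hc.convexOn (g w) (g w')
    rwa [hg1 w] at h
  have hlb : ⟪w', g w⟫ - φ (g w) ≤ fenchel φ w' := le_ciSup (hbdd w') (g w)
  have hCS : ⟪w' - w, g w' - g w⟫ ≤ ‖w' - w‖ * ‖g w' - g w‖ := real_inner_le_norm _ _
  have hkey : fenchel φ w' - fenchel φ w - ⟪g w, w' - w⟫ ∈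
      Set.Icc (0:ℝ) (‖w' - w‖ * ‖g w' - g w‖) := by
    rw [hsup w, hsup w']
    have e1 : ⟪g w, w' - w⟫ = ⟪w', g w⟫ - ⟪w, g w⟫ := by
      rw [inner_sub_right, real_inner_comm (g w) w', real_inner_comm (g w) w]
    have e2 : ⟪w, g w' - g w⟫ = ⟪w, g w'⟫ - ⟪w, g w⟫ := inner_sub_right _ _ _
    have e3 : ⟪w' - w, g w' - g w⟫ =
        ⟪w', g w'⟫ - ⟪w', g w⟫ - ⟪w, g w'⟫ + ⟪w, g w⟫ := by
      rw [inner_sub_left, inner_sub_right, inner_sub_right]; ring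
    rw [e2] at hA
    rw [e3] at hCS
    have hlb' : ⟪w', g w⟫ - φ (g w) ≤ ⟪w', g w'⟫ - φ (g w') := by
      rw [← hsup w']; exact hlb
    constructor
    · rw [e1]; linarith
    · rw [e1]; linarith
  rw [Real.norm_eq_abs, InnerProductSpace.toDual_apply_apply, abs_of_nonneg hkey.1]
  calc fenchel φ w' - fenchel φ w - ⟪g w, w' - w⟫ ≤ ‖w' - w‖ * ‖g w' - g w‖ := hkey.2
    _ ≤ ‖w' - w‖ * c := mul_le_mul_of_nonneg_left hw' (norm_nonneg _)
    _ = c * ‖w' - w‖ := mul_comm _ _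

set_option maxHeartbeats 1000000 in
/-- along the mirror-descent closed loop, with `y(t) = ∇φ*(x(t))`,
`(d/dt) V(x(t)) ≤ f(ȳ) − f(y(t)) ≤ 0`, and `(d/dt) V(x(t)) < 0` whenever `x(t) ≠ x̄`. -/
theorem lyapunov_decrease {n : ℕ} (f φ : EuclideanSpace ℝ (Fin n) → ℝ)
    (hf : ContDiff ℝ 1 f) (hfconv : StrictConvexOn ℝ Set.univ f)
    (ybar : EuclideanSpace ℝ (Fin n)) (hmin : ∀ z, f ybar ≤ f z)
    (hφ : ContDiff ℝ 2 φ) (hφconv : StrictConvexOn ℝ Set.univ φ)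
    (hleg : LegendreType φ)
    (xbar : EuclideanSpace ℝ (Fin n)) (hxbar : xbar = gradient φ ybar)
    (V : EuclideanSpace ℝ (Fin n) → ℝ)
    (hV : V = fun x => bregman (fenchel φ) x xbar)
    (x : ℝ → EuclideanSpace ℝ (Fin n)) (y : ℝ → EuclideanSpace ℝ (Fin n))
    (hode : ∀ t : ℝ, 0 ≤ t →
      HasDerivAt x (-gradient f (gradient (fenchel φ) (x t))) t)
    (hy : y = fun t => gradient (fenchel φ) (x t)) :
    ∀ t : ℝ, 0 ≤ t →
      deriv (fun s => V (x s)) t ≤ f ybar - f (y t) ∧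
      f ybar - f (y t) ≤ 0 ∧
      (x t ≠ xbar → deriv (fun s => V (x s)) t < 0) := by
  obtain ⟨g, hginj, hg1, hg2, hg4⟩ := fenchel_package hφ hφconv hleg
  have hfdiff : Differentiable ℝ f := hf.differentiable one_ne_zero
  have hgrad_eq : ∀ w, gradient (fenchel φ) w = g w := fun w => (hg4 w).gradient
  have hybar : g xbar = ybar := by rw [hxbar]; exact hg2 ybar
  have hVfun : V = fun z => fenchel φ z - fenchel φ xbar - ⟪ybar, z - xbar⟫ := by
    rw [hV]; funext z; rw [bregman, hgrad_eq xbar, hybar]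
  intro t ht
  have hyt : y t = g (x t) := by rw [hy]; exact hgrad_eq (x t)
  have hx' : HasDerivAt x (-gradient f (g (x t))) t := by
    have h := hode t ht
    rwa [hgrad_eq (x t)] at h
  -- gradient of V at x t
  have hlin : HasFDerivAt (fun z : EuclideanSpace ℝ (Fin n) => ⟪ybar, z - xbar⟫)
      (innerSL ℝ ybar) (x t) := by
    have h1 : HasFDerivAt (fun z : EuclideanSpace ℝ (Fin n) => ⟪ybar, z⟫)
        (innerSL ℝ ybar) (x t) := (innerSL ℝ ybar).hasFDerivAt
    have h2 := h1.sub_const ⟪ybar, xbar⟫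
    have h3 : (fun z : EuclideanSpace ℝ (Fin n) => ⟪ybar, z - xbar⟫)
        = fun z => ⟪ybar, z⟫ - ⟪ybar, xbar⟫ := funext fun z => inner_sub_right _ _ _
    rw [h3]; exact h2
  have hVgrad : HasGradientAt V (g (x t) - ybar) (x t) := by
    rw [hVfun]
    apply hasGradientAt_of_eq
      ((((hg4 (x t)).hasFDerivAt.sub_const (fenchel φ xbar)).sub hlin))
    intro z
    simp [InnerProductSpace.toDual_apply_apply, inner_sub_left]
  have hchain := hVgrad.hasFDerivAt.comp_hasDerivAt t hx'
  have hchain' : HasDerivAt (fun s => V (x s)) ⟪g (x t) - ybar, -gradient f (g (x t))⟫ t := by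
    have h2 : (InnerProductSpace.toDual ℝ (EuclideanSpace ℝ (Fin n))) (g (x t) - ybar)
        (-gradient f (g (x t))) = ⟪g (x t) - ybar, -gradient f (g (x t))⟫ :=
      InnerProductSpace.toDual_apply_apply
    rw [← h2]
    exact hchain
  have hderiv : deriv (fun s => V (x s)) t = ⟪g (x t) - ybar, -gradient f (g (x t))⟫ :=
    hchain'.deriv
  have hflip : ⟪g (x t) - ybar, -gradient f (g (x t))⟫
      = ⟪gradient f (g (x t)), ybar - g (x t)⟫ := by
    rw [inner_neg_right, real_inner_comm, ← inner_neg_right, neg_sub]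
  have hineq : ⟪gradient f (g (x t)), ybar - g (x t)⟫ ≤ f ybar - f (g (x t)) :=
    grad_ineq_s6 hfdiff hfconv.convexOn (g (x t)) ybar
  have hmin' : f ybar - f (g (x t)) ≤ 0 := tsub_nonpos.mpr (hmin _)
  refine ⟨?_, ?_, ?_⟩
  · rw [hderiv, hflip, hyt]; exact hineq
  · rw [hyt]; exact hmin'
  · intro hne
    have hne' : g (x t) ≠ ybar := by
      rw [← hybar]
      exact fun h => hne (hginj h)
    have hstrict : ⟪gradient f (g (x t)), ybar - g (x t)⟫ < f ybar - f (g (x t)) :=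
      grad_ineq_strict hfdiff hfconv hne'
    rw [hderiv, hflip]
    linarith
end

section
/- Let f : ℝⁿ → ℝ be C¹ and strictly convex with unique global minimizer ȳ, φ : ℝⁿ → ℝ C², strictly convex, Legendre type, with conjugate φ*; set x̄ := ∇φ(ȳ), y₀ := ∇φ*(x₀), q(x, u) := f(∇φ*(x)) + f*(−u) + ⟨u, ȳ⟩. Let x : [0, ∞) → ℝⁿ solve ẋ(t) = −∇f(∇φ*(x(t))), x(0) = x₀, and suppose x(t) → x̄ as t → ∞. Then with u(t) := −∇f(∇φ*(x(t))), the infinite-horizon cost satisfies ∫₀^∞ q(x(t), u(t)) dt = D_{φ*}(x₀, x̄) = D_φ(ȳ, y₀), i.e., the limit as t → ∞ of ∫₀ᵗ q(x(s), u(s)) ds equals D_{φ*}(x₀, x̄). -/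
open scoped RealInnerProductSpace
open Filter MeasureTheory

open Set InnerProductSpace Topology
set_option linter.unusedSectionVars false
set_option linter.unusedVariables false
set_option maxHeartbeats 1000000

section MirrorAux
variable {E : Type*} [NormedAddCommGroup E] [InnerProductSpace ℝ E] [CompleteSpace E]
variable {φ : E → ℝ}


lemma strictConvexOn_comp_line (h : StrictConvexOn ℝ Set.univ φ) {a b : E} (hab : a ≠ b) :
    StrictConvexOn ℝ Set.univ (fun t : ℝ => φ (a + t • (b - a))) := by
  refine ⟨convex_univ, ?_⟩
  intro s _ t _ hst α β hα hβ hαβ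
  have hinj : a + s • (b - a) ≠ a + t • (b - a) := by
    intro hEq
    have h0 := add_left_cancel hEq
    have hz : (s - t) • (b - a) = 0 := by rw [sub_smul, h0, sub_self]
    rcases smul_eq_zero.mp hz with h1 | h2
    · exact hst (sub_eq_zero.mp h1)
    · exact hab (sub_eq_zero.mp h2).symm
  have key : a + (α * s + β * t) • (b - a) = α • (a + s • (b - a)) + β • (a + t • (b - a)) := by
    have hβ' : β = 1 - α := by linarith
    subst hβ'
    module
  simp only [smul_eq_mul]
  rw [key]
  exact h.2 (mem_univ _) (mem_univ _) hinj hα hβ hαβ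

lemma hasDerivAt_comp_line (hd : Differentiable ℝ φ) (a b : E) (t : ℝ) :
    HasDerivAt (fun t : ℝ => φ (a + t • (b - a))) ⟪gradient φ (a + t • (b - a)), b - a⟫ t := by
  have hc : HasDerivAt (fun t : ℝ => a + t • (b - a)) (b - a) t := by
    simpa using ((hasDerivAt_id t).smul_const (b - a)).const_add a
  have hg := (hasGradientAt_iff_hasFDerivAt.mp (hd (a + t • (b - a))).hasGradientAt).comp_hasDerivAt t hc
  simpa [InnerProductSpace.toDual_apply_apply, Function.comp_def] using hg

lemma gradient_inner_lt (h : StrictConvexOn ℝ Set.univ φ) (hd : Differentiable ℝ φ)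
    {a b : E} (hab : a ≠ b) : ⟪gradient φ a, b - a⟫ < φ b - φ a := by
  have hg := strictConvexOn_comp_line h hab
  have h0 := hasDerivAt_comp_line hd a b 0
  have h1 := hg.lt_slope_of_hasDerivAt (mem_univ (0:ℝ)) (mem_univ (1:ℝ)) one_pos (by simpa using h0)
  simpa [slope_def_field] using h1

lemma gradient_inner_le (h : StrictConvexOn ℝ Set.univ φ) (hd : Differentiable ℝ φ)
    (a b : E) : ⟪gradient φ a, b - a⟫ ≤ φ b - φ a := by
  rcases eq_or_ne a b with rfl | hab
  · simp
  · exact (gradient_inner_lt h hd hab).le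

lemma gradient_strictMono (h : StrictConvexOn ℝ Set.univ φ) (hd : Differentiable ℝ φ)
    {a b : E} (hab : a ≠ b) : 0 < ⟪gradient φ b - gradient φ a, b - a⟫ := by
  have h1 := gradient_inner_lt h hd hab
  have h2 := gradient_inner_lt h hd hab.symm
  have : ⟪gradient φ b, a - b⟫ = -⟪gradient φ b, b - a⟫ := by
    rw [← neg_sub b a, inner_neg_right]
  rw [inner_sub_left]
  rw [this] at h2
  linarith


/-- effective domain of the conjugate -/
def fdom (φ : E → ℝ) : Set E := {v | BddAbove (Set.range fun z => ⟪v, z⟫ - φ z)}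

lemma grad_mem_fdom (h : StrictConvexOn ℝ Set.univ φ) (hd : Differentiable ℝ φ) (z : E) :
    gradient φ z ∈ fdom φ := by
  refine ⟨⟪gradient φ z, z⟫ - φ z, ?_⟩
  rintro r ⟨w, rfl⟩
  have := gradient_inner_le h hd z w
  rw [inner_sub_right] at this
  simp only
  linarith

lemma fdom_convex : Convex ℝ (fdom φ) := by
  rintro v hv w hw α β hα hβ hαβ
  obtain ⟨C, hC⟩ := hv
  obtain ⟨D, hD⟩ := hw
  refine ⟨α * C + β * D, ?_⟩
  rintro r ⟨z, rfl⟩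
  have h1 : ⟪v, z⟫ - φ z ≤ C := hC ⟨z, rfl⟩
  have h2 : ⟪w, z⟫ - φ z ≤ D := hD ⟨z, rfl⟩
  simp only [inner_add_left, real_inner_smul_left]
  have hφz : α * φ z + β * φ z = φ z := by rw [← add_mul, hαβ, one_mul]
  nlinarith [mul_le_mul_of_nonneg_left h1 hα, mul_le_mul_of_nonneg_left h2 hβ]


variable [FiniteDimensional ℝ E]

lemma exists_grad_eq_of_mem_interior (h : StrictConvexOn ℝ Set.univ φ)
    (hd : Differentiable ℝ φ) {v : E} (hv : v ∈ interior (fdom φ)) :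
    ∃ z, gradient φ z = v := by
  rcases subsingleton_or_nontrivial E with hE | hE
  · exact ⟨0, Subsingleton.elim _ _⟩
  obtain ⟨ε, hε, hball⟩ := Metric.isOpen_iff.mp isOpen_interior v hv
  set d := Module.finrank ℝ E with hdd
  have hd0 : 0 < d := Module.finrank_pos
  have hd0' : (0:ℝ) < (d:ℝ) := by exact_mod_cast hd0
  set b := stdOrthonormalBasis ℝ E with hb
  have hmem : ∀ (w : E), ‖w‖ = ε/2 → v + w ∈ fdom φ := by
    intro w hw
    apply interior_subset
    apply hball
    simp only [Metric.mem_ball, dist_eq_norm, add_sub_cancel_left, hw]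
    linarith
  have hbnd : ∀ i : Fin d, ∀ s : ℝ, |s| = 1 →
      ∃ C, ∀ z, (ε/2 * s) * ⟪b i, z⟫ ≤ (φ z - ⟪v, z⟫) + C := by
    intro i s hs
    have hnorm : ‖(ε/2 * s) • b i‖ = ε/2 := by
      rw [norm_smul, b.orthonormal.1 i]
      simp [abs_mul, hs, abs_of_pos hε]
    obtain ⟨C, hC⟩ := hmem _ hnorm
    refine ⟨C, fun z => ?_⟩
    have := hC ⟨z, rfl⟩
    simp only [inner_add_left, real_inner_smul_left] at this
    linarith
  have hplus : ∀ i : Fin d, ∃ C, ∀ z, (ε/2) * ⟪b i, z⟫ ≤ (φ z - ⟪v, z⟫) + C := by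
    intro i; simpa using hbnd i 1 (by norm_num)
  have hminus : ∀ i : Fin d, ∃ C, ∀ z, -((ε/2) * ⟪b i, z⟫) ≤ (φ z - ⟪v, z⟫) + C := by
    intro i
    obtain ⟨C, hC⟩ := hbnd i (-1) (by norm_num)
    exact ⟨C, fun z => by have := hC z; linarith⟩
  choose Cp hCp using hplus
  choose Cm hCm using hminus
  set C : ℝ := ∑ i, max (Cp i) (Cm i) with hCdef
  have habs : ∀ (i : Fin d) (z : E),
      (ε/2) * |⟪b i, z⟫| ≤ (φ z - ⟪v, z⟫) + max (Cp i) (Cm i) := by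
    intro i z
    rcases abs_cases (⟪b i, z⟫ : ℝ) with ⟨he, _⟩ | ⟨he, _⟩ <;> rw [he]
    · have := hCp i z; have := le_max_left (Cp i) (Cm i); linarith
    · have := hCm i z; have := le_max_right (Cp i) (Cm i); linarith
  have hnormle : ∀ z : E, ‖z‖ ≤ ∑ i, |⟪b i, z⟫| := by
    intro z
    calc ‖z‖ = ‖∑ i, (⟪b i, z⟫ : ℝ) • b i‖ := by rw [b.sum_repr' z]
    _ ≤ ∑ i, ‖(⟪b i, z⟫ : ℝ) • b i‖ := norm_sum_le _ _
    _ = ∑ i, |⟪b i, z⟫| := by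
        refine Finset.sum_congr rfl fun i _ => ?_
        rw [norm_smul, b.orthonormal.1 i, mul_one, Real.norm_eq_abs]
  have hkey : ∀ z : E, (ε/2) * ‖z‖ ≤ (d:ℝ) * (φ z - ⟪v, z⟫) + C := by
    intro z
    calc (ε/2) * ‖z‖ ≤ (ε/2) * ∑ i, |⟪b i, z⟫| := by
          apply mul_le_mul_of_nonneg_left (hnormle z) (by linarith)
    _ = ∑ i, (ε/2) * |⟪b i, z⟫| := Finset.mul_sum _ _ _
    _ ≤ ∑ i : Fin d, ((φ z - ⟪v, z⟫) + max (Cp i) (Cm i)) :=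
          Finset.sum_le_sum fun i _ => habs i z
    _ = (d:ℝ) * (φ z - ⟪v, z⟫) + C := by
          rw [Finset.sum_add_distrib, Finset.sum_const, Finset.card_univ]
          simp [hCdef, nsmul_eq_mul]
  -- coercivity
  have hcont : Continuous fun z : E => φ z - ⟪v, z⟫ :=
    hd.continuous.sub (continuous_const.inner continuous_id)
  have hcoer : Tendsto (fun z : E => φ z - ⟪v, z⟫) (cocompact E) atTop := by
    have h1 : Tendsto (fun z : E => ((ε/2) * ‖z‖ - C) / (d:ℝ)) (cocompact E) atTop := by
      apply Tendsto.atTop_div_const hd0'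
      exact tendsto_atTop_add_const_right _ (-C)
        ((tendsto_norm_cocompact_atTop).const_mul_atTop (by linarith : (0:ℝ) < ε/2)) |>.congr
        (fun z => by ring)
    apply tendsto_atTop_mono _ h1
    intro z
    rw [div_le_iff₀ hd0']
    have := hkey z
    nlinarith
  obtain ⟨z₀, hz₀⟩ := hcont.exists_forall_le hcoer
  -- gradient vanishes at the minimum
  have hfd : HasFDerivAt (fun z : E => φ z - ⟪v, z⟫)
      (fderiv ℝ φ z₀ - (toDual ℝ E v : E →L[ℝ] ℝ)) z₀ := by
    exact ((hd z₀).hasFDerivAt).sub ((toDual ℝ E v).hasFDerivAt)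
  have hmin : IsLocalMin (fun z : E => φ z - ⟪v, z⟫) z₀ := Filter.Eventually.of_forall hz₀
  have hzero := hmin.fderiv_eq_zero
  have hdiff : DifferentiableAt ℝ (fun z : E => φ z - ⟪v, z⟫) z₀ := hfd.differentiableAt
  rw [hfd.fderiv] at hzero
  refine ⟨z₀, ?_⟩
  have : fderiv ℝ φ z₀ = (toDual ℝ E v : E →L[ℝ] ℝ) := by
    rwa [sub_eq_zero] at hzero
  rw [gradient, this]
  exact (toDual ℝ E).symm_apply_apply v



/-- Bounded gradient norm confines points to a compact set. -/
lemma legendre_compact_confine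
    (hleg : Tendsto (fun z => ‖gradient φ z‖) (cocompact E) atTop) (M : ℝ) :
    ∃ K : Set E, IsCompact K ∧ ∀ z, ‖gradient φ z‖ ≤ M → z ∈ K := by
  have : {z : E | M + 1 ≤ ‖gradient φ z‖} ∈ cocompact E :=
    hleg (Ici_mem_atTop (M + 1))
  obtain ⟨K, hK, hKsub⟩ := mem_cocompact.mp this
  refine ⟨K, hK, fun z hz => ?_⟩
  by_contra hzK
  have := hKsub hzK
  simp only [mem_setOf_eq] at this
  linarith

lemma gradient_range_closed (hgc : Continuous (gradient φ))
    (hleg : Tendsto (fun z => ‖gradient φ z‖) (cocompact E) atTop) :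
    IsClosed (Set.range (gradient φ)) := by
  apply IsSeqClosed.isClosed
  intro u p hu hup
  choose zk hzk using hu
  obtain ⟨M, hM⟩ := (hup.norm : Tendsto (fun k => ‖u k‖) atTop (𝓝 ‖p‖)).bddAbove_range
  obtain ⟨K, hK, hKconf⟩ := legendre_compact_confine hleg M
  have hzkK : ∀ k, zk k ∈ K := fun k => hKconf _ (by rw [hzk k]; exact hM ⟨k, rfl⟩)
  obtain ⟨z, _, ψ, hψ, hψt⟩ := hK.tendsto_subseq hzkK
  have h1 : Tendsto (fun k => gradient φ (zk (ψ k))) atTop (𝓝 (gradient φ z)) :=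
    (hgc.tendsto z).comp hψt
  have h2 : Tendsto (fun k => gradient φ (zk (ψ k))) atTop (𝓝 p) := by
    simp only [hzk]
    exact hup.comp hψ.tendsto_atTop
  exact ⟨z, tendsto_nhds_unique h1 h2⟩

theorem gradient_surjective (h : StrictConvexOn ℝ Set.univ φ) (hd : Differentiable ℝ φ)
    (hgc : Continuous (gradient φ))
    (hleg : Tendsto (fun z => ‖gradient φ z‖) (cocompact E) atTop) :
    Function.Surjective (gradient φ) := by
  have hDD1 : ∀ z, gradient φ z ∈ fdom φ := grad_mem_fdom h hd
  -- the affine span of fdom is everything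
  have hspan : affineSpan ℝ (fdom φ) = ⊤ := by
    rw [AffineSubspace.affineSpan_eq_top_iff_vectorSpan_eq_top_of_nonempty ℝ E E ⟨_, hDD1 0⟩]
    by_contra hne
    obtain ⟨a, ha, ha0⟩ := Submodule.exists_mem_ne_zero_of_ne_bot
      ((Submodule.orthogonal_eq_bot_iff).ne.mpr hne)
    have h1 := gradient_strictMono h hd (show (0:E) ≠ a from fun hh => ha0 hh.symm)
    have hdmem : gradient φ a - gradient φ 0 ∈ vectorSpan ℝ (fdom φ) := by
      have := vsub_mem_vectorSpan ℝ (hDD1 a) (hDD1 0)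
      simpa [vsub_eq_sub] using this
    have h2 : ⟪gradient φ a - gradient φ 0, a⟫ = 0 :=
      (Submodule.mem_orthogonal _ a).mp ha _ hdmem
    rw [sub_zero] at h1
    linarith
  have hint : (interior (fdom φ)).Nonempty :=
    (fdom_convex.interior_nonempty_iff_affineSpan_eq_top).mpr hspan
  have hclosed := gradient_range_closed hgc hleg
  have hIR : interior (fdom φ) ⊆ Set.range (gradient φ) := fun v hv =>
    exists_grad_eq_of_mem_interior h hd hv
  have hRI : Set.range (gradient φ) ⊆ interior (fdom φ) := by
    rintro p ⟨z, rfl⟩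
    by_contra hp
    obtain ⟨fℓ, hfℓ⟩ := geometric_hahn_banach_open_point
      (fdom_convex.interior) isOpen_interior hp
    obtain ⟨y, hy⟩ := hint
    set aν := (toDual ℝ E).symm fℓ with haνdef
    have haνap : ∀ w, ⟪aν, w⟫ = fℓ w := fun w => toDual_symm_apply
    have haν : aν ≠ 0 := by
      intro h0
      have h1 := hfℓ y hy
      have h2 : fℓ y = ⟪aν, y⟫ := (haνap y).symm
      have h3 : fℓ (gradient φ z) = ⟪aν, gradient φ z⟫ := (haνap _).symm
      rw [h0] at h2 h3
      simp only [inner_zero_left] at h2 h3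
      rw [h2, h3] at h1
      exact lt_irrefl 0 h1
    -- every element of fdom has fℓ-value at most fℓ (gradient φ z)
    have hw1 : ∀ w ∈ fdom φ, fℓ w ≤ fℓ (gradient φ z) := by
      intro w hw
      have hseg : ∀ t ∈ Set.Ico (0:ℝ) 1, t * fℓ w + (1 - t) * fℓ y < fℓ (gradient φ z) := by
        intro t ht
        have hmem : t • w + (1 - t) • y ∈ interior (fdom φ) :=
          fdom_convex.combo_closure_interior_mem_interior (subset_closure hw) hy
            ht.1 (by linarith [ht.2]) (by ring)
        have := hfℓ _ hmem
        simpa [map_add, _root_.map_smul, smul_eq_mul] using this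
      have htend : Tendsto (fun t : ℝ => t * fℓ w + (1 - t) * fℓ y) (𝓝[<] (1:ℝ))
          (𝓝 (1 * fℓ w + (1 - 1) * fℓ y)) := by
        apply Filter.Tendsto.mono_left _ nhdsWithin_le_nhds
        exact (Continuous.tendsto (by continuity) 1)
      have hev : ∀ᶠ t in 𝓝[<] (1:ℝ), t * fℓ w + (1 - t) * fℓ y ≤ fℓ (gradient φ z) := by
        filter_upwards [Ico_mem_nhdsLT_of_mem (show (1:ℝ) ∈ Set.Ioc (0:ℝ) 1 by norm_num)]
          with t ht
        exact (hseg t ht).le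
      have := le_of_tendsto htend hev
      simpa using this
    have hmono := gradient_strictMono h hd (show z ≠ z + aν by simp [haν])
    have hle := hw1 _ (hDD1 (z + aν))
    have hinner : ⟪gradient φ (z + aν) - gradient φ z, z + aν - z⟫
        = fℓ (gradient φ (z + aν)) - fℓ (gradient φ z) := by
      rw [real_inner_comm]
      have : z + aν - z = aν := by abel
      rw [this, haνap, map_sub]
    rw [hinner] at hmono
    linarith
  have hEq : Set.range (gradient φ) = interior (fdom φ) := Subset.antisymm hRI hIR
  have huniv : Set.range (gradient φ) = Set.univ :=
    IsClopen.eq_univ ⟨hclosed, hEq ▸ isOpen_interior⟩ ⟨_, ⟨0, rfl⟩⟩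
  intro v
  have : v ∈ Set.range (gradient φ) := huniv ▸ mem_univ v
  exact this


lemma gradient_injective_s8 (h : StrictConvexOn ℝ Set.univ φ) (hd : Differentiable ℝ φ) :
    Function.Injective (gradient φ) := by
  intro a b hab
  by_contra hne
  have := gradient_strictMono h hd hne
  rw [hab, sub_self] at this
  simp at this

lemma invGrad_continuous [FiniteDimensional ℝ E]
    (hgc : Continuous (gradient φ))
    (hleg : Tendsto (fun z => ‖gradient φ z‖) (cocompact E) atTop)
    (hinj : Function.Injective (gradient φ))
    {T : E → E} (hT : ∀ v, gradient φ (T v) = v) : Continuous T := by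
  rw [continuous_iff_seqContinuous]
  intro u v huv
  apply tendsto_of_subseq_tendsto
  intro ns hns
  obtain ⟨M, hM⟩ := (huv.norm : Tendsto (fun k => ‖u k‖) atTop (𝓝 ‖v‖)).bddAbove_range
  obtain ⟨K, hK, hKconf⟩ := legendre_compact_confine hleg M
  have hmem : ∀ k, T (u (ns k)) ∈ K := fun k =>
    hKconf _ (by rw [hT]; exact hM ⟨ns k, rfl⟩)
  obtain ⟨w, _, ms, hms, hmst⟩ := hK.tendsto_subseq hmem
  refine ⟨ms, ?_⟩
  have hgw : gradient φ w = v := by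
    have h1 : Tendsto (fun k => gradient φ (T (u (ns (ms k))))) atTop (𝓝 (gradient φ w)) :=
      (hgc.tendsto w).comp hmst
    have h2 : Tendsto (fun k => gradient φ (T (u (ns (ms k))))) atTop (𝓝 v) := by
      simp only [hT]
      exact huv.comp (hns.comp hms.tendsto_atTop)
    exact tendsto_nhds_unique h1 h2
  have : w = T v := hinj (by rw [hgw, hT])
  rwa [← this]

lemma conj_bddAbove (h : StrictConvexOn ℝ Set.univ φ) (hd : Differentiable ℝ φ)
    {v w : E} (hw : gradient φ w = v) :
    ∀ z : E, ⟪v, z⟫ - φ z ≤ ⟪v, w⟫ - φ w := by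
  intro z
  have := gradient_inner_le h hd w z
  rw [hw, inner_sub_right] at this
  linarith

lemma conj_iSup_eq (h : StrictConvexOn ℝ Set.univ φ) (hd : Differentiable ℝ φ)
    {v w : E} (hw : gradient φ w = v) :
    (⨆ z : E, (⟪v, z⟫ - φ z)) = ⟪v, w⟫ - φ w := by
  apply le_antisymm
  · exact ciSup_le (conj_bddAbove h hd hw)
  · refine le_ciSup (f := fun z : E => ⟪v, z⟫ - φ z) ⟨⟪v, w⟫ - φ w, ?_⟩ w
    rintro r ⟨z, rfl⟩
    exact conj_bddAbove h hd hw z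

lemma hasGradientAt_conj (h : StrictConvexOn ℝ Set.univ φ) (hd : Differentiable ℝ φ)
    {T : E → E} (hT : ∀ v, gradient φ (T v) = v) (hTc : Continuous T) (v : E) :
    HasGradientAt (fun v : E => ⨆ z : E, (⟪v, z⟫ - φ z)) (T v) v := by
  set ψ : E → ℝ := fun v => ⨆ z : E, (⟪v, z⟫ - φ z) with hψdef
  have hψ : ∀ w, ψ w = ⟪w, T w⟫ - φ (T w) := fun w => conj_iSup_eq h hd (hT w)
  have key : ∀ w : E, 0 ≤ ψ w - ψ v - ⟪T v, w - v⟫ ∧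
      ψ w - ψ v - ⟪T v, w - v⟫ ≤ ‖w - v‖ * ‖T w - T v‖ := by
    intro w
    constructor
    · have hlow : ⟪w, T v⟫ - φ (T v) ≤ ψ w := by
        rw [hψ w]; exact conj_bddAbove h hd (hT w) (T v)
      rw [hψ v]
      have : ⟪T v, w - v⟫ = ⟪w, T v⟫ - ⟪v, T v⟫ := by
        rw [inner_sub_right, real_inner_comm (T v) w, real_inner_comm (T v) v]
      linarith
    · have hup : ⟪v, T w - T v⟫ ≤ φ (T w) - φ (T v) := by
        have := gradient_inner_le h hd (T v) (T w)
        rwa [hT v] at this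
      have hcs : ⟪w - v, T w - T v⟫ ≤ ‖w - v‖ * ‖T w - T v‖ := real_inner_le_norm _ _
      rw [hψ w, hψ v]
      have hexp : ⟪w, T w⟫ - ⟪v, T v⟫ - ⟪T v, w - v⟫ - ⟪v, T w - T v⟫
          = ⟪w - v, T w - T v⟫ := by
        simp only [inner_sub_left, inner_sub_right]
        rw [real_inner_comm (T v) w, real_inner_comm (T v) v]
        ring
      linarith
  rw [hasGradientAt_iff_isLittleO, Asymptotics.isLittleO_iff]
  intro c hc
  have hev : ∀ᶠ w in 𝓝 v, ‖T w - T v‖ ≤ c := by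
    have h1 := (hTc.tendsto v) (Metric.closedBall_mem_nhds (T v) hc)
    filter_upwards [h1] with w hw
    rw [← dist_eq_norm]
    exact Metric.mem_closedBall.mp hw
  filter_upwards [hev] with w hw
  have hk := key w
  have hnn : ‖ψ w - ψ v - ⟪T v, w - v⟫‖ = ψ w - ψ v - ⟪T v, w - v⟫ := by
    rw [Real.norm_eq_abs, abs_of_nonneg hk.1]
  rw [hnn]
  calc ψ w - ψ v - ⟪T v, w - v⟫ ≤ ‖w - v‖ * ‖T w - T v‖ := hk.2
  _ ≤ ‖w - v‖ * c := by
      apply mul_le_mul_of_nonneg_left hw (norm_nonneg _)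
  _ = c * ‖w - v‖ := mul_comm _ _

end MirrorAux


/-- along the mirror-descent closed loop with `x(t) → x̄`, the
infinite-horizon cost of `u(t) = −∇f(∇φ*(x(t)))` equals
`D_{φ*}(x₀, x̄) = D_φ(ȳ, y₀)`, i.e. `∫₀ᵗ q → D_{φ*}(x₀, x̄)` as `t → ∞`. -/
theorem mirror_descent_optimal_cost {n : ℕ} (f φ : EuclideanSpace ℝ (Fin n) → ℝ)
    (hf : ContDiff ℝ 1 f) (hfconv : StrictConvexOn ℝ Set.univ f)
    (ybar : EuclideanSpace ℝ (Fin n)) (hmin : ∀ z, f ybar ≤ f z)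
    (hφ : ContDiff ℝ 2 φ) (hφconv : StrictConvexOn ℝ Set.univ φ)
    (hleg : LegendreType φ)
    (xbar : EuclideanSpace ℝ (Fin n)) (hxbar : xbar = gradient φ ybar)
    (q : EuclideanSpace ℝ (Fin n) → EuclideanSpace ℝ (Fin n) → ℝ)
    (hq : q = fun x u => f (gradient (fenchel φ) x) + fenchel f (-u) + ⟪u, ybar⟫)
    (x₀ y₀ : EuclideanSpace ℝ (Fin n)) (hy₀ : y₀ = gradient (fenchel φ) x₀)
    (x : ℝ → EuclideanSpace ℝ (Fin n)) (hx0 : x 0 = x₀)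
    (hode : ∀ t : ℝ, 0 ≤ t →
      HasDerivAt x (-gradient f (gradient (fenchel φ) (x t))) t)
    (hstab : Tendsto x atTop (nhds xbar)) :
    Tendsto (fun t : ℝ =>
        ∫ s in (0:ℝ)..t, q (x s) (-gradient f (gradient (fenchel φ) (x s))))
      atTop (nhds (bregman (fenchel φ) x₀ xbar)) ∧
    bregman (fenchel φ) x₀ xbar = bregman φ ybar y₀ := by
  subst hq hxbar hy₀ hx0
  have hφd : Differentiable ℝ φ := hφ.differentiable (by norm_num)
  have hfd : Differentiable ℝ f := hf.differentiable (by norm_num)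
  have hgc : Continuous (gradient φ) := by
    show Continuous fun z => (toDual ℝ _).symm (fderiv ℝ φ z)
    exact (toDual ℝ _).symm.continuous.comp (hφ.continuous_fderiv (by norm_num))
  have hgfc : Continuous (gradient f) := by
    show Continuous fun z => (toDual ℝ _).symm (fderiv ℝ f z)
    exact (toDual ℝ _).symm.continuous.comp (hf.continuous_fderiv (by norm_num))
  have hsurj := gradient_surjective hφconv hφd hgc hleg
  have hinj := gradient_injective_s8 hφconv hφd
  set T := Function.invFun (gradient φ) with hTdef
  have hTr : ∀ v, gradient φ (T v) = v := fun v => Function.rightInverse_invFun hsurj v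
  have hTl : ∀ z, T (gradient φ z) = z := fun z => Function.leftInverse_invFun hinj z
  have hTc : Continuous T := invGrad_continuous hgc hleg hinj hTr
  have hψgrad : ∀ v, HasGradientAt (fenchel φ) (T v) v := fun v =>
    hasGradientAt_conj hφconv hφd hTr hTc v
  have hG : ∀ v, gradient (fenchel φ) v = T v := fun v => (hψgrad v).gradient
  have hGxbar : gradient (fenchel φ) (gradient φ ybar) = ybar := by rw [hG, hTl]
  have hψd : Differentiable ℝ (fenchel φ) := fun v => (hψgrad v).differentiableAt
  have hψc : Continuous (fenchel φ) := hψd.continuous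
  have hψval : ∀ v, fenchel φ v = ⟪v, T v⟫ - φ (T v) := fun v =>
    conj_iSup_eq hφconv hφd (hTr v)
  have hffen : ∀ y, fenchel f (gradient f y) = ⟪gradient f y, y⟫ - f y := fun y =>
    conj_iSup_eq hfconv hfd rfl
  -- pointwise integrand simplification
  have hq' : ∀ v : EuclideanSpace ℝ (Fin n),
      f (gradient (fenchel φ) v) + fenchel f (- -gradient f (gradient (fenchel φ) v)) +
        ⟪-gradient f (gradient (fenchel φ) v), ybar⟫
        = ⟪gradient f (T v), T v - ybar⟫ := by
    intro v
    rw [neg_neg, hG, hffen (T v), inner_sub_right, inner_neg_left]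
    ring
  -- the Lyapunov function
  set V : ℝ → ℝ := fun t => fenchel φ (x t) - fenchel φ (gradient φ ybar)
      - ⟪ybar, x t - gradient φ ybar⟫ with hVdef
  have hVt : ∀ t : ℝ, 0 ≤ t →
      HasDerivAt V (-(⟪gradient f (T (x t)), T (x t) - ybar⟫)) t := by
    intro t ht
    have hx' := hode t ht
    have h1 : HasDerivAt (fun s => fenchel φ (x s))
        ⟪T (x t), -gradient f (gradient (fenchel φ) (x t))⟫ t := by
      have := (hasGradientAt_iff_hasFDerivAt.mp (hψgrad (x t))).comp_hasDerivAt t hx'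
      simpa [InnerProductSpace.toDual_apply_apply, Function.comp_def] using this
    have h2 : HasDerivAt (fun s : ℝ => ⟪ybar, x s - gradient φ ybar⟫)
        ⟪ybar, -gradient f (gradient (fenchel φ) (x t))⟫ t := by
      have hx'' : HasDerivAt (fun s => x s - gradient φ ybar)
          (-gradient f (gradient (fenchel φ) (x t))) t := hx'.sub_const _
      have := (innerSL ℝ ybar).hasFDerivAt.comp_hasDerivAt t hx''
      simpa [Function.comp_def] using this
    have h3 : HasDerivAt (fun s => fenchel φ (x s) - fenchel φ (gradient φ ybar)
        - ⟪ybar, x s - gradient φ ybar⟫) (⟪T (x t), -gradient f (gradient (fenchel φ) (x t))⟫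
        - ⟪ybar, -gradient f (gradient (fenchel φ) (x t))⟫) t :=
      (h1.sub_const (fenchel φ (gradient φ ybar))).sub h2
    rw [hVdef]
    convert h3 using 1
    simp only [hG, inner_neg_right, inner_sub_right]
    rw [real_inner_comm (gradient f (T (x t))) (T (x t)), real_inner_comm (gradient f (T (x t))) ybar]
    ring
  -- FTC
  have hFTC : ∀ t : ℝ, 0 ≤ t →
      (∫ s in (0:ℝ)..t, ⟪gradient f (T (x s)), T (x s) - ybar⟫) = V 0 - V t := by
    intro t ht
    have huIcc : uIcc (0:ℝ) t = Icc 0 t := uIcc_of_le ht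
    have hderiv : ∀ s ∈ uIcc (0:ℝ) t,
        HasDerivAt (fun s => -V s) ⟪gradient f (T (x s)), T (x s) - ybar⟫ s := by
      intro s hs
      rw [huIcc] at hs
      simpa [Pi.neg_def] using (hVt s hs.1).neg
    have hcont : ContinuousOn (fun s => ⟪gradient f (T (x s)), T (x s) - ybar⟫)
        (uIcc (0:ℝ) t) := by
      intro s hs
      rw [huIcc] at hs
      apply ContinuousAt.continuousWithinAt
      have hxs : ContinuousAt x s := (hode s hs.1).continuousAt
      have hTx : ContinuousAt (fun s => T (x s)) s := hTc.continuousAt.comp hxs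
      exact (hgfc.continuousAt.comp hTx).inner (hTx.sub continuousAt_const)
    rw [intervalIntegral.integral_eq_sub_of_hasDerivAt hderiv hcont.intervalIntegrable]
    ring
  -- limit of V
  have hVlim : Tendsto V atTop (𝓝 0) := by
    have hW : ContinuousAt (fun v => fenchel φ v - fenchel φ (gradient φ ybar)
        - ⟪ybar, v - gradient φ ybar⟫) (gradient φ ybar) := by
      apply ContinuousAt.sub
      · exact (hψc.continuousAt).sub continuousAt_const
      · exact continuousAt_const.inner (continuousAt_id.sub continuousAt_const)
    have := hW.tendsto.comp hstab
    simpa [hVdef, Function.comp_def] using this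
  have hbreg0 : bregman (fenchel φ) (x 0) (gradient φ ybar) = V 0 := by
    rw [bregman, hVdef, hGxbar]
  constructor
  · rw [hbreg0]
    have hlim : Tendsto (fun t => V 0 - V t) atTop (𝓝 (V 0 - 0)) :=
      Tendsto.sub tendsto_const_nhds hVlim
    rw [sub_zero] at hlim
    apply Tendsto.congr' _ hlim
    filter_upwards [eventually_ge_atTop (0:ℝ)] with t ht
    rw [← hFTC t ht]
    apply intervalIntegral.integral_congr
    intro s _
    exact (hq' (x s)).symm
  · unfold bregman
    rw [hGxbar, hG, hψval (x 0), hψval (gradient φ ybar), hTl, hTr]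
    simp only [inner_sub_right]
    rw [real_inner_comm ybar (x 0), real_inner_comm ybar (gradient φ ybar)]
    ring
end

section
/- Let f : ℝⁿ → ℝ be C¹ and strictly convex with unique global minimizer ȳ, μ-strongly convex with respect to a C², strictly convex, Legendre-type potential φ : ℝⁿ → ℝ (μ > 0), with conjugate φ*; set x̄ := ∇φ(ȳ) and V(x) := D_{φ*}(x, x̄). Let x : [0, ∞) → ℝⁿ solve ẋ(t) = −∇f(∇φ*(x(t))), x(0) = x₀, with output y(t) := ∇φ*(x(t)). Then for all t ≥ 0, V(x(t)) ≤ e^{−μt} V(x₀) + ∫₀ᵗ e^{−μ(t−s)} ( f(ȳ) − f(y(s)) ) ds. -/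
open scoped RealInnerProductSpace
open Filter MeasureTheory

variable {n : ℕ}

local notation "E" => EuclideanSpace ℝ (Fin n)


lemma grad_line_deriv {φ : E → ℝ} (hd : Differentiable ℝ φ)
    (a b : EuclideanSpace ℝ (Fin n)) (t : ℝ) :
    HasDerivAt (fun t : ℝ => φ (a + t • (b - a)))
      ⟪gradient φ (a + t • (b - a)), b - a⟫ t := by
  have h1 : HasDerivAt (fun t : ℝ => a + t • (b - a)) (b - a) t := by
    simpa using ((hasDerivAt_id t).smul_const (b - a)).const_add a
  have h2 : HasFDerivAt φ
      (InnerProductSpace.toDual ℝ _ (gradient φ (a + t • (b - a)))) (a + t • (b - a)) :=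
    (hd _).hasGradientAt
  simpa [Function.comp_def] using h2.comp_hasDerivAt t h1

/-- First-order condition for a differentiable convex function. -/
lemma grad_first_order {φ : E → ℝ} (hconv : ConvexOn ℝ Set.univ φ)
    (hd : Differentiable ℝ φ) (a b : EuclideanSpace ℝ (Fin n)) :
    φ a + ⟪gradient φ a, b - a⟫ ≤ φ b := by
  set q : ℝ → ℝ := fun t => φ (a + t • (b - a)) with hqdef
  have hq0 : q 0 = φ a := by simp [hqdef]
  have hq1 : q 1 = φ b := by simp [hqdef]
  have hq : HasDerivAt q ⟪gradient φ a, b - a⟫ 0 := by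
    simpa using grad_line_deriv hd a b 0
  have hslope : ∀ᶠ t in nhdsWithin (0:ℝ) (Set.Ioi 0), slope q 0 t ≤ q 1 - q 0 := by
    filter_upwards [Ioc_mem_nhdsGT_of_mem (by norm_num : (0:ℝ) ∈ Set.Ico 0 1)] with t ht
    have ht0 : 0 < t := ht.1
    have ht1 : t ≤ 1 := ht.2
    have hcomb : q t ≤ (1 - t) * q 0 + t * q 1 := by
      have := hconv.2 (Set.mem_univ a) (Set.mem_univ b)
        (by linarith : (0:ℝ) ≤ 1 - t) (le_of_lt ht0) (by ring)
      have heq : (1 - t) • a + t • b = a + t • (b - a) := by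
        module
      rw [heq] at this
      simpa [hq0, hq1, hqdef] using this
    rw [slope_def_field, div_le_iff₀ (by simpa using ht0)]
    nlinarith
  have htend : Tendsto (slope q 0) (nhdsWithin (0:ℝ) (Set.Ioi 0))
      (nhds ⟪gradient φ a, b - a⟫) := by
    have h := hasDerivWithinAt_iff_tendsto_slope.mp (hq.hasDerivWithinAt (s := Set.Ioi 0))
    rwa [Set.diff_singleton_eq_self (by simp)] at h
  have hfin := le_of_tendsto htend hslope
  rw [hq0, hq1] at hfin
  linarith

lemma grad_injective_s12 {φ : E → ℝ} (hconv : StrictConvexOn ℝ Set.univ φ)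
    (hd : Differentiable ℝ φ) {a b : EuclideanSpace ℝ (Fin n)}
    (h : gradient φ a = gradient φ b) : a = b := by
  by_contra hne
  set m : EuclideanSpace ℝ (Fin n) := (1/2 : ℝ) • a + (1/2 : ℝ) • b with hm
  have hstrict : φ m < (1/2 : ℝ) * φ a + (1/2 : ℝ) * φ b := by
    have := hconv.2 (Set.mem_univ a) (Set.mem_univ b) hne
      (by norm_num : (0:ℝ) < 1/2) (by norm_num : (0:ℝ) < 1/2) (by norm_num)
    simpa [hm] using this
  have h1 := grad_first_order hconv.convexOn hd a m
  have h2 := grad_first_order hconv.convexOn hd b m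
  rw [h] at h1
  have hsum : ⟪gradient φ b, m - a⟫ + ⟪gradient φ b, m - b⟫ = 0 := by
    rw [← inner_add_right]
    have : (m - a) + (m - b) = 0 := by rw [hm]; module
    rw [this, inner_zero_right]
  linarith

/-- Regularized minimization: for every `ε > 0` there is `z` with
`∇φ z + ε z = v` and `ε ‖z‖` bounded independently of `ε`. -/
lemma reg_min {φ : E → ℝ} (hφ : ContDiff ℝ 2 φ) (hconv : ConvexOn ℝ Set.univ φ)
    (v : EuclideanSpace ℝ (Fin n)) {ε : ℝ} (hε : 0 < ε) :
    ∃ z : EuclideanSpace ℝ (Fin n), gradient φ z + ε • z = v ∧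
      ε * ‖z‖ ≤ 2 * (‖v‖ + ‖gradient φ 0‖) := by
  have hd : Differentiable ℝ φ := hφ.differentiable (by norm_num)
  set g0 := gradient φ 0 with hg0
  set ψ : EuclideanSpace ℝ (Fin n) → ℝ :=
    fun z => φ z - ⟪v, z⟫ + (ε/2) * ⟪z, z⟫ with hψ
  have hψcont : Continuous ψ := by
    apply Continuous.add
    · exact (hφ.continuous).sub (continuous_const.inner continuous_id)
    · exact continuous_const.mul (continuous_id.inner continuous_id)
  have hgrow : ∀ z, ψ 0 + ⟪g0 - v, z⟫ + (ε/2) * ‖z‖^2 ≤ ψ z := by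
    intro z
    have h1 := grad_first_order hconv hd 0 z
    simp only [sub_zero] at h1
    have h2 : ⟪z, z⟫ = ‖z‖^2 := real_inner_self_eq_norm_sq z
    have h3 : ψ 0 = φ 0 := by simp [hψ]
    rw [h3, hψ]
    simp only [inner_sub_left]
    rw [h2]
    linarith
  -- the sublevel set is compact
  set S := {z : EuclideanSpace ℝ (Fin n) | ψ z ≤ ψ 0} with hS
  have hSbound : ∀ z ∈ S, ‖z‖ ≤ 2 * (‖v‖ + ‖g0‖) / ε := by
    intro z hz
    have h1 := hgrow z
    have h2 : ψ z ≤ ψ 0 := hz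
    have lin : ∀ A B C I : ℝ, A + -I + C ≤ B → B ≤ A → C ≤ I := by intros; linarith
    have h3 : (ε/2) * ‖z‖^2 ≤ ⟪v - g0, z⟫ := by
      have h4 : ⟪g0 - v, z⟫ = -⟪v - g0, z⟫ := by
        rw [← inner_neg_left]; congr 1; abel
      rw [h4] at h1
      exact lin _ _ _ _ h1 h2
    have h4 : ⟪v - g0, z⟫ ≤ (‖v‖ + ‖g0‖) * ‖z‖ := by
      calc ⟪v - g0, z⟫ ≤ ‖v - g0‖ * ‖z‖ := real_inner_le_norm _ _
        _ ≤ (‖v‖ + ‖g0‖) * ‖z‖ := by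
            apply mul_le_mul_of_nonneg_right (norm_sub_le _ _) (norm_nonneg _)
    rw [le_div_iff₀ hε]
    have h34 := le_trans h3 h4
    rcases eq_or_lt_of_le (norm_nonneg z) with h | h
    · rw [← h]; nlinarith [norm_nonneg v, norm_nonneg g0]
    · have h6 : ε/2 * ‖z‖ * ‖z‖ ≤ (‖v‖ + ‖g0‖) * ‖z‖ := by nlinarith [h34]
      have h7 := le_of_mul_le_mul_right h6 h
      linarith
  have hScompact : IsCompact S := by
    rw [Metric.isCompact_iff_isClosed_bounded]
    constructor
    · exact isClosed_le hψcont continuous_const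
    · apply Bornology.IsBounded.subset (Metric.isBounded_closedBall
        (x := (0:EuclideanSpace ℝ (Fin n))) (r := 2 * (‖v‖ + ‖g0‖) / ε))
      intro z hz
      simpa [Metric.mem_closedBall, dist_eq_norm] using hSbound z hz
  obtain ⟨z₀, hz₀S, hz₀min⟩ := hScompact.exists_isMinOn ⟨0, by simp [hS]⟩
    (hψcont.continuousOn)
  have hglobal : IsMinOn ψ Set.univ z₀ := by
    intro z _
    rcases le_or_gt (ψ z) (ψ 0) with h | h
    · exact hz₀min h
    · exact le_of_lt (lt_of_le_of_lt (hz₀min (by simp [hS] : (0:EuclideanSpace ℝ (Fin n)) ∈ S)) h)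
  have hloc : IsLocalMin ψ z₀ := hglobal.isLocalMin Filter.univ_mem
  -- compute the derivative of ψ at z₀
  have hDφ : HasFDerivAt φ (InnerProductSpace.toDual ℝ _ (gradient φ z₀)) z₀ :=
    (hd z₀).hasGradientAt
  have hDv : HasFDerivAt (fun z : EuclideanSpace ℝ (Fin n) => ⟪v, z⟫)
      (innerSL ℝ v) z₀ := (innerSL ℝ v).hasFDerivAt
  have hDq := ((hasFDerivAt_id z₀).inner ℝ (hasFDerivAt_id z₀)).const_mul (ε/2)
  have hDψ := (hDφ.sub hDv).add hDq
  have hzero := hloc.hasFDerivAt_eq_zero hDψ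
  have heval : ∀ w, ⟪gradient φ z₀ - v + ε • z₀, w⟫ = 0 := by
    intro w
    have := congrFun (congrArg DFunLike.coe hzero) w
    simp only [ContinuousLinearMap.add_apply, ContinuousLinearMap.sub_apply,
      ContinuousLinearMap.coe_smul', Pi.smul_apply, ContinuousLinearMap.comp_apply,
      ContinuousLinearMap.prod_apply, ContinuousLinearMap.coe_id', id_eq,
      fderivInnerCLM_apply, InnerProductSpace.toDual_apply_apply, innerSL_apply_apply,
      ContinuousLinearMap.zero_apply, smul_eq_mul] at this
    rw [inner_add_left, inner_sub_left, inner_smul_left]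
    simp only [RCLike.conj_to_real]
    have hsymm : ⟪w, z₀⟫ = ⟪z₀, w⟫ := real_inner_comm _ _
    nlinarith [this, hsymm]
  have hvec : gradient φ z₀ - v + ε • z₀ = 0 := by
    have := heval (gradient φ z₀ - v + ε • z₀)
    exact inner_self_eq_zero.mp this
  have hmem0 : (0:EuclideanSpace ℝ (Fin n)) ∈ S := by simp [hS]
  have h2 : ψ z₀ ≤ ψ 0 := hz₀min hmem0
  clear hzero hDψ hDq hDφ hDv heval hglobal hloc hz₀min hScompact hSbound hψcont
  refine ⟨z₀, by rw [← sub_eq_zero]; rw [← hvec]; abel, ?_⟩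
  -- the bound
  have h1 := hgrow z₀
  have h3 : (ε/2) * ‖z₀‖^2 ≤ (‖v‖ + ‖g0‖) * ‖z₀‖ := by
    have h4 : ⟪g0 - v, z₀⟫ = -⟪v - g0, z₀⟫ := by
      rw [← inner_neg_left]; congr 1; abel
    have h5 : ⟪v - g0, z₀⟫ ≤ (‖v‖ + ‖g0‖) * ‖z₀‖ := by
      calc ⟪v - g0, z₀⟫ ≤ ‖v - g0‖ * ‖z₀‖ := real_inner_le_norm _ _
        _ ≤ (‖v‖ + ‖g0‖) * ‖z₀‖ := by
            apply mul_le_mul_of_nonneg_right (norm_sub_le _ _) (norm_nonneg _)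
    rw [h4] at h1
    have lin : ∀ A B C I J : ℝ, A + -I + C ≤ B → B ≤ A → I ≤ J → C ≤ J := by intros; linarith
    exact lin _ _ _ _ _ h1 h2 h5
  rcases eq_or_lt_of_le (norm_nonneg z₀) with h | h
  · rw [← h, mul_zero]; positivity
  · have h6 : ε/2 * ‖z₀‖ * ‖z₀‖ ≤ (‖v‖ + ‖g0‖) * ‖z₀‖ := by
      rw [show ε/2*‖z₀‖*‖z₀‖ = ε/2*‖z₀‖^2 by ring]; exact h3
    have h7 := le_of_mul_le_mul_right h6 h
    linarith

lemma grad_continuous {φ : E → ℝ} (hφ : ContDiff ℝ 2 φ) :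
    Continuous (fun z : EuclideanSpace ℝ (Fin n) => gradient φ z) := by
  have h1 : Continuous (fderiv ℝ φ) := hφ.continuous_fderiv (by norm_num)
  exact (InnerProductSpace.toDual ℝ (EuclideanSpace ℝ (Fin n))).symm.continuous.comp h1

lemma grad_surjective_s12 {φ : E → ℝ} (hφ : ContDiff ℝ 2 φ) (hconv : ConvexOn ℝ Set.univ φ)
    (hleg : LegendreType φ) (v : EuclideanSpace ℝ (Fin n)) :
    ∃ z, gradient φ z = v := by
  -- sequence of regularized solutions
  set C := 2 * (‖v‖ + ‖gradient φ 0‖) with hC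
  have hεk : ∀ k : ℕ, (0:ℝ) < 1 / (k + 1) := by
    intro k; positivity
  set z : ℕ → EuclideanSpace ℝ (Fin n) :=
    fun k => (reg_min hφ hconv v (hεk k)).choose with hz
  have hzspec : ∀ k, gradient φ (z k) + (1/(k+1:ℝ)) • z k = v ∧
      (1/(k+1:ℝ)) * ‖z k‖ ≤ C := fun k => (reg_min hφ hconv v (hεk k)).choose_spec
  have hgradbound : ∀ k, ‖gradient φ (z k)‖ ≤ ‖v‖ + C := by
    intro k
    have h1 : gradient φ (z k) = v - (1/(k+1:ℝ)) • z k := by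
      rw [← (hzspec k).1]; abel
    rw [h1]
    calc ‖v - (1/(k+1:ℝ)) • z k‖ ≤ ‖v‖ + ‖(1/(k+1:ℝ)) • z k‖ := norm_sub_le _ _
      _ ≤ ‖v‖ + C := by
          rw [norm_smul]
          have := (hzspec k).2
          simp only [Real.norm_eq_abs, abs_of_pos (hεk k)]
          linarith
  -- Legendre: all z k are in a compact set
  have hev : ∀ᶠ w : EuclideanSpace ℝ (Fin n) in cocompact _, ‖v‖ + C < ‖gradient φ w‖ :=
    hleg.eventually (eventually_gt_atTop (‖v‖ + C))
  obtain ⟨K, hKcomp, hKsub⟩ := mem_cocompact.mp hev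
  have hzK : ∀ k, z k ∈ K := by
    intro k
    by_contra hk
    exact absurd (hgradbound k) (not_le.mpr (hKsub hk))
  obtain ⟨w, hwK, sub, hψmono, htend⟩ := hKcomp.tendsto_subseq hzK
  refine ⟨w, ?_⟩
  have hcont := grad_continuous (n := n) hφ
  have h1 : Tendsto (fun j => gradient φ (z (sub j))) atTop (nhds (gradient φ w)) :=
    (hcont.continuousAt.tendsto).comp htend
  -- also it tends to v
  obtain ⟨R, hR⟩ : ∃ R, ∀ p ∈ K, ‖p‖ ≤ R := by
    obtain ⟨R, hR⟩ := hKcomp.isBounded.subset_closedBall 0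
    exact ⟨R, fun p hp => by simpa [dist_eq_norm] using hR hp⟩
  have h2 : Tendsto (fun j => gradient φ (z (sub j))) atTop (nhds v) := by
    have heq : ∀ j, gradient φ (z (sub j)) = v - (1/((sub j)+1:ℝ)) • z (sub j) := by
      intro j
      rw [← (hzspec (sub j)).1]; abel
    simp only [heq]
    have h0 : Tendsto (fun j => (1/((sub j)+1:ℝ)) • z (sub j)) atTop
        (nhds (0:EuclideanSpace ℝ (Fin n))) := by
      rw [tendsto_zero_iff_norm_tendsto_zero]
      apply squeeze_zero (fun j => norm_nonneg _) (g := fun j => R * (1/((sub j)+1:ℝ)))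
      · intro j
        rw [norm_smul]
        simp only [Real.norm_eq_abs, abs_of_pos (hεk (sub j))]
        have := hR _ (hzK (sub j))
        have hpos := le_of_lt (hεk (sub j))
        calc 1/((sub j)+1:ℝ) * ‖z (sub j)‖ ≤ 1/((sub j)+1:ℝ) * R := by
              apply mul_le_mul_of_nonneg_left this hpos
          _ = R * (1/((sub j)+1:ℝ)) := by ring
      · rw [show (0:ℝ) = R * 0 by ring]
        apply Tendsto.const_mul
        have hat : Tendsto (fun j => ((sub j : ℝ) + 1)) atTop atTop := by
          apply tendsto_atTop_add_const_right
          exact tendsto_natCast_atTop_atTop.comp hψmono.tendsto_atTop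
        simpa [one_div, Function.comp_def] using tendsto_inv_atTop_zero.comp hat
    have := tendsto_const_nhds (α := ℕ) (x := v) |>.sub h0
    simpa using this
  exact tendsto_nhds_unique h1 h2

lemma fenchel_ub {φ : E → ℝ} {Y : EuclideanSpace ℝ (Fin n) → EuclideanSpace ℝ (Fin n)} (hconv : ConvexOn ℝ Set.univ φ) (hd : Differentiable ℝ φ)
    (hY : ∀ v, gradient φ (Y v) = v) (x z : EuclideanSpace ℝ (Fin n)) :
    ⟪x, z⟫ - φ z ≤ ⟪x, Y x⟫ - φ (Y x) := by
  have h1 := grad_first_order hconv hd (Y x) z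
  rw [hY x, inner_sub_right] at h1
  linarith

lemma fenchel_eq {φ : E → ℝ} {Y : EuclideanSpace ℝ (Fin n) → EuclideanSpace ℝ (Fin n)} (hconv : ConvexOn ℝ Set.univ φ) (hd : Differentiable ℝ φ)
    (hY : ∀ v, gradient φ (Y v) = v) (x : EuclideanSpace ℝ (Fin n)) :
    fenchel φ x = ⟪x, Y x⟫ - φ (Y x) := by
  apply le_antisymm
  · exact ciSup_le (fenchel_ub hconv hd hY x)
  · apply le_ciSup (f := fun z => ⟪x, z⟫ - φ z)
      ⟨_, Set.forall_mem_range.mpr (fenchel_ub hconv hd hY x)⟩ (Y x)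

lemma Y_continuous {φ : E → ℝ} {Y : EuclideanSpace ℝ (Fin n) → EuclideanSpace ℝ (Fin n)} (hφ : ContDiff ℝ 2 φ) (hconv : StrictConvexOn ℝ Set.univ φ)
    (hleg : Tendsto (fun z => ‖gradient φ z‖) (cocompact (EuclideanSpace ℝ (Fin n))) atTop)
    (hY : ∀ v, gradient φ (Y v) = v) : Continuous Y := by
  have hd : Differentiable ℝ φ := hφ.differentiable (by norm_num)
  rw [continuous_iff_seqContinuous]
  intro u x₀ hu
  -- u : ℕ → E tends to x₀; show Y ∘ u tends to Y x₀
  obtain ⟨R, hR⟩ : ∃ R, ∀ k, ‖u k‖ ≤ R ∧ ‖x₀‖ ≤ R := by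
    obtain ⟨R, hR⟩ := (Metric.isBounded_range_of_tendsto u hu).subset_closedBall 0
    refine ⟨max R ‖x₀‖, fun k => ⟨?_, le_max_right _ _⟩⟩
    have := hR (Set.mem_range_self k)
    simp only [Metric.mem_closedBall, dist_eq_norm, sub_zero] at this
    exact le_trans this (le_max_left _ _)
  have hev : ∀ᶠ w : EuclideanSpace ℝ (Fin n) in cocompact _, R < ‖gradient φ w‖ :=
    hleg.eventually (eventually_gt_atTop R)
  obtain ⟨K, hKcomp, hKsub⟩ := mem_cocompact.mp hev
  have hYK : ∀ k, Y (u k) ∈ K := by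
    intro k
    by_contra hk
    have := hKsub hk
    simp only [Set.mem_setOf_eq, hY (u k)] at this
    exact absurd (hR k).1 (not_le.mpr this)
  apply tendsto_of_subseq_tendsto
  intro ns hns
  obtain ⟨w, hwK, sub, hsubmono, htend⟩ := hKcomp.tendsto_subseq (fun j => hYK (ns j))
  refine ⟨sub, ?_⟩
  have hw : w = Y x₀ := by
    apply grad_injective_s12 hconv hd
    rw [hY x₀]
    have h1 : Tendsto (fun j => gradient φ (Y (u (ns (sub j))))) atTop
        (nhds (gradient φ w)) := by
      have hcont : Continuous (fun z : EuclideanSpace ℝ (Fin n) => gradient φ z) := by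
        exact (InnerProductSpace.toDual ℝ _).symm.continuous.comp
          (hφ.continuous_fderiv (by norm_num))
      exact (hcont.continuousAt.tendsto).comp htend
    have h2 : Tendsto (fun j => gradient φ (Y (u (ns (sub j))))) atTop (nhds x₀) := by
      simp only [hY]
      exact hu.comp ((hns.comp hsubmono.tendsto_atTop))
    exact tendsto_nhds_unique h1 h2
  rw [← hw]
  exact htend

lemma fenchel_hasGradient {φ : E → ℝ} {Y : EuclideanSpace ℝ (Fin n) → EuclideanSpace ℝ (Fin n)} (hφ : ContDiff ℝ 2 φ) (hconv : StrictConvexOn ℝ Set.univ φ)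
    (hleg : Tendsto (fun z => ‖gradient φ z‖) (cocompact (EuclideanSpace ℝ (Fin n))) atTop)
    (hY : ∀ v, gradient φ (Y v) = v) (x₀ : EuclideanSpace ℝ (Fin n)) :
    HasGradientAt (fenchel φ) (Y x₀) x₀ := by
  have hd : Differentiable ℝ φ := hφ.differentiable (by norm_num)
  have hfen := fenchel_eq hconv.convexOn hd hY
  have hYcont := Y_continuous hφ hconv hleg hY
  rw [hasGradientAt_iff_isLittleO, Asymptotics.isLittleO_iff]
  intro c hc
  have hev : ∀ᶠ x in nhds x₀, ‖Y x - Y x₀‖ ≤ c := by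
    have := (hYcont.tendsto x₀).eventually
      (Metric.closedBall_mem_nhds (Y x₀) hc)
    filter_upwards [this] with x hx
    simpa [Metric.mem_closedBall, dist_eq_norm] using hx
  filter_upwards [hev] with x hx
  have hcomm1 : ⟪Y x₀, x - x₀⟫ = ⟪x, Y x₀⟫ - ⟪x₀, Y x₀⟫ := by
    rw [inner_sub_right, real_inner_comm (Y x₀) x, real_inner_comm (Y x₀) x₀]
  have hcomm2 : ⟪x - x₀, Y x - Y x₀⟫ = ⟪x, Y x⟫ - ⟪x, Y x₀⟫ - ⟪x₀, Y x⟫ + ⟪x₀, Y x₀⟫ := by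
    rw [inner_sub_right, inner_sub_left, inner_sub_left]; ring
  have hlow : 0 ≤ fenchel φ x - fenchel φ x₀ - ⟪Y x₀, x - x₀⟫ := by
    have h1 : ⟪x, Y x₀⟫ - φ (Y x₀) ≤ fenchel φ x := by
      rw [hfen x]; exact fenchel_ub hconv.convexOn hd hY x (Y x₀)
    rw [hfen x₀, hcomm1]
    linarith
  have hup : fenchel φ x - fenchel φ x₀ - ⟪Y x₀, x - x₀⟫ ≤ ⟪x - x₀, Y x - Y x₀⟫ := by
    have h2 : ⟪x₀, Y x⟫ - φ (Y x) ≤ fenchel φ x₀ := by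
      rw [hfen x₀]; exact fenchel_ub hconv.convexOn hd hY x₀ (Y x)
    rw [hfen x, hcomm1, hcomm2]
    linarith
  have hbound : |fenchel φ x - fenchel φ x₀ - ⟪Y x₀, x - x₀⟫| ≤ c * ‖x - x₀‖ := by
    rw [abs_of_nonneg hlow]
    calc fenchel φ x - fenchel φ x₀ - ⟪Y x₀, x - x₀⟫ ≤ ⟪x - x₀, Y x - Y x₀⟫ := hup
      _ ≤ ‖x - x₀‖ * ‖Y x - Y x₀‖ := real_inner_le_norm _ _
      _ ≤ ‖x - x₀‖ * c := by
          apply mul_le_mul_of_nonneg_left hx (norm_nonneg _)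
      _ = c * ‖x - x₀‖ := by ring
  simpa [Real.norm_eq_abs] using hbound


/-- if `f` is `μ`-strongly convex w.r.t. `φ` (`μ > 0`), then along the
mirror-descent closed loop,
`V(x(t)) ≤ e^{−μt} V(x₀) + ∫₀ᵗ e^{−μ(t−s)} (f(ȳ) − f(y(s))) ds`. -/
theorem strongly_convex_integral_bound {n : ℕ} (f φ : EuclideanSpace ℝ (Fin n) → ℝ)
    (hf : ContDiff ℝ 1 f) (hfconv : StrictConvexOn ℝ Set.univ f)
    (ybar : EuclideanSpace ℝ (Fin n)) (hmin : ∀ z, f ybar ≤ f z)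
    (hφ : ContDiff ℝ 2 φ) (hφconv : StrictConvexOn ℝ Set.univ φ)
    (hleg : LegendreType φ)
    (μ : ℝ) (hμ : 0 < μ)
    (hstrong : ∀ y y' : EuclideanSpace ℝ (Fin n),
      f y + ⟪gradient f y, y' - y⟫ + μ * bregman φ y' y ≤ f y')
    (xbar : EuclideanSpace ℝ (Fin n)) (hxbar : xbar = gradient φ ybar)
    (V : EuclideanSpace ℝ (Fin n) → ℝ)
    (hV : V = fun x => bregman (fenchel φ) x xbar)
    (x₀ : EuclideanSpace ℝ (Fin n)) (x y : ℝ → EuclideanSpace ℝ (Fin n))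
    (hx0 : x 0 = x₀)
    (hode : ∀ t : ℝ, 0 ≤ t →
      HasDerivAt x (-gradient f (gradient (fenchel φ) (x t))) t)
    (hy : y = fun t => gradient (fenchel φ) (x t)) :
    ∀ t : ℝ, 0 ≤ t →
      V (x t) ≤ Real.exp (-(μ * t)) * V x₀
        + ∫ s in (0:ℝ)..t, Real.exp (-(μ * (t - s))) * (f ybar - f (y s)) := by
  have hφconv' : ConvexOn ℝ Set.univ φ := hφconv.convexOn
  have hd : Differentiable ℝ φ := hφ.differentiable (by norm_num)
  choose Y hY using fun v => grad_surjective_s12 hφ hφconv' hleg v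
  have hfen : ∀ p, fenchel φ p = ⟪p, Y p⟫ - φ (Y p) := fenchel_eq hφconv' hd hY
  have hGrad : ∀ p, HasGradientAt (fenchel φ) (Y p) p :=
    fun p => fenchel_hasGradient hφ hφconv hleg hY p
  have hgradfen : ∀ p, gradient (fenchel φ) p = Y p := fun p => (hGrad p).gradient
  have hYcont : Continuous Y := Y_continuous hφ hφconv hleg hY
  have hYxbar : Y xbar = ybar := grad_injective_s12 hφconv hd (by rw [hY, hxbar])
  have hyY : ∀ t, y t = Y (x t) := by
    intro t; rw [hy]; exact hgradfen (x t)
  -- formula for V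
  have hVform : V = fun p => fenchel φ p - fenchel φ xbar - ⟪ybar, p - xbar⟫ := by
    rw [hV]; funext p
    simp only [bregman]
    rw [hgradfen xbar, hYxbar]
  -- Bregman duality
  have hbreg : ∀ t, bregman φ ybar (y t) = V (x t) := by
    intro t
    rw [hVform]
    simp only [bregman]
    rw [hyY t, hY (x t), hfen (x t), hfen xbar, hYxbar]
    rw [inner_sub_right, inner_sub_right, real_inner_comm ybar (x t),
      real_inner_comm ybar xbar]
    ring
  -- derivative of V along the trajectory
  have hVD : ∀ t, 0 ≤ t → HasDerivAt (fun s => V (x s))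
      ⟪gradient f (y t), ybar - y t⟫ t := by
    intro t ht
    have hode' := hode t ht
    have hfd : HasFDerivAt (fenchel φ)
        (InnerProductSpace.toDual ℝ _ (Y (x t))) (x t) :=
      hasGradientAt_iff_hasFDerivAt.mp (hGrad (x t))
    have hlin : HasFDerivAt (fun p : EuclideanSpace ℝ (Fin n) => ⟪ybar, p - xbar⟫)
        (innerSL ℝ ybar) (x t) := by
      have h1 : (fun p : EuclideanSpace ℝ (Fin n) => ⟪ybar, p - xbar⟫)
          = fun p => ⟪ybar, p⟫ - ⟪ybar, xbar⟫ := by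
        funext p; rw [inner_sub_right]
      rw [h1]
      exact (innerSL ℝ ybar).hasFDerivAt.sub_const _
    have hFV : HasFDerivAt V
        (InnerProductSpace.toDual ℝ _ (Y (x t)) - innerSL ℝ ybar) (x t) := by
      rw [hVform]
      exact (hfd.sub_const _).sub hlin
    have hcomp := hFV.comp_hasDerivAt t hode'
    have heval : (InnerProductSpace.toDual ℝ _ (Y (x t)) - innerSL ℝ ybar)
        (-gradient f (gradient (fenchel φ) (x t)))
        = ⟪gradient f (y t), ybar - y t⟫ := by
      rw [hgradfen (x t), ← hyY t]
      simp only [ContinuousLinearMap.sub_apply, InnerProductSpace.toDual_apply_apply,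
        innerSL_apply_apply]
      rw [inner_neg_right, inner_neg_right, inner_sub_right,
        real_inner_comm (gradient f (y t)) ybar, real_inner_comm (gradient f (y t)) (y t)]
      ring
    rw [heval] at hcomp
    exact hcomp
  -- the key differential inequality
  have hkey : ∀ t, 0 ≤ t →
      ⟪gradient f (y t), ybar - y t⟫ ≤ (f ybar - f (y t)) - μ * V (x t) := by
    intro t _
    have hs := hstrong (y t) ybar
    rw [hbreg t] at hs
    linarith
  -- continuity facts
  have hxcont : ∀ s : ℝ, 0 ≤ s → ContinuousAt x s := fun s hs => (hode s hs).continuousAt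
  set c : ℝ → ℝ := fun s => f ybar - f (y s) with hc
  have hccont : ∀ s : ℝ, 0 ≤ s → ContinuousAt c s := by
    intro s hs
    have h1 : (fun s => f (y s)) = fun s => f (Y (x s)) := by
      funext u; rw [hyY u]
    have h2 : ContinuousAt (fun s => f (Y (x s))) s :=
      ((hf.continuous.comp hYcont).continuousAt).comp (hxcont s hs)
    rw [hc]
    exact continuousAt_const.sub (h1 ▸ h2)
  set G : ℝ → ℝ := fun s => Real.exp (μ * s) * c s with hG
  have hGcont : ∀ s : ℝ, 0 ≤ s → ContinuousAt G s := by
    intro s hs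
    exact ((Real.continuous_exp.comp (continuous_const.mul continuous_id)).continuousAt).mul
      (hccont s hs)
  intro T hT
  -- the monotone auxiliary function
  set F : ℝ → ℝ := fun u => (∫ s in (0:ℝ)..u, G s) - Real.exp (μ * u) * V (x u) with hF
  have hWd : ∀ t, 0 ≤ t → HasDerivAt (fun u => Real.exp (μ * u) * V (x u))
      (μ * Real.exp (μ * t) * V (x t) + Real.exp (μ * t) * ⟪gradient f (y t), ybar - y t⟫)
      t := by
    intro t ht
    have hexp : HasDerivAt (fun u : ℝ => Real.exp (μ * u)) (μ * Real.exp (μ * t)) t := by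
      have := (Real.hasDerivAt_exp (μ * t)).comp t ((hasDerivAt_id t).const_mul μ)
      simpa [mul_comm, Function.comp_def] using this
    have := hexp.mul (hVD t ht)
    convert this using 1
    all_goals rfl
  have hmono : MonotoneOn F (Set.Icc 0 T) := by
    apply monotoneOn_of_deriv_nonneg (convex_Icc 0 T)
    · -- continuity on Icc
      apply ContinuousOn.sub
      · have hint : IntegrableOn G (Set.uIcc 0 T) volume := by
          apply ContinuousOn.integrableOn_uIcc
          intro s hs
          rw [Set.uIcc_of_le hT] at hs
          exact (hGcont s hs.1).continuousWithinAt
        have := intervalIntegral.continuousOn_primitive_interval hint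
        rwa [Set.uIcc_of_le hT] at this
      · intro s hs
        exact ((hWd s hs.1).continuousAt).continuousWithinAt
    · -- differentiability on the interior
      rw [interior_Icc]
      intro t ht
      have hd1 : HasDerivAt F (G t - (μ * Real.exp (μ * t) * V (x t)
          + Real.exp (μ * t) * ⟪gradient f (y t), ybar - y t⟫)) t := by
        apply HasDerivAt.sub
        · apply intervalIntegral.integral_hasDerivAt_right
          · apply ContinuousOn.intervalIntegrable
            intro s hs
            rw [Set.uIcc_of_le (le_of_lt ht.1)] at hs
            exact (hGcont s hs.1).continuousWithinAt
          · exact ⟨Set.Ioi 0, Ioi_mem_nhds ht.1,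
              (continuousOn_of_forall_continuousAt
                (fun s hs => hGcont s (le_of_lt hs))).aestronglyMeasurable
                measurableSet_Ioi⟩
          · exact hGcont t (le_of_lt ht.1)
        · exact hWd t (le_of_lt ht.1)
      exact hd1.differentiableAt.differentiableWithinAt
    · rw [interior_Icc]
      intro t ht
      have hd1 : HasDerivAt F (G t - (μ * Real.exp (μ * t) * V (x t)
          + Real.exp (μ * t) * ⟪gradient f (y t), ybar - y t⟫)) t := by
        apply HasDerivAt.sub
        · apply intervalIntegral.integral_hasDerivAt_right
          · apply ContinuousOn.intervalIntegrable
            intro s hs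
            rw [Set.uIcc_of_le (le_of_lt ht.1)] at hs
            exact (hGcont s hs.1).continuousWithinAt
          · exact ⟨Set.Ioi 0, Ioi_mem_nhds ht.1,
              (continuousOn_of_forall_continuousAt
                (fun s hs => hGcont s (le_of_lt hs))).aestronglyMeasurable
                measurableSet_Ioi⟩
          · exact hGcont t (le_of_lt ht.1)
        · exact hWd t (le_of_lt ht.1)
      rw [hd1.deriv]
      have hk := hkey t (le_of_lt ht.1)
      have hpos := Real.exp_pos (μ * t)
      have h1 : 0 ≤ Real.exp (μ * t) * ((c t - μ * V (x t))
          - ⟪gradient f (y t), ybar - y t⟫) := by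
        apply mul_nonneg (le_of_lt hpos)
        rw [hc]
        simp only
        linarith
      rw [hG]
      simp only
      nlinarith [h1]
  -- conclude: F 0 ≤ F T
  have hFT := hmono (Set.mem_Icc.mpr ⟨le_refl 0, hT⟩) (Set.mem_Icc.mpr ⟨hT, le_refl T⟩) hT
  have hF0 : F 0 = -(V x₀) := by
    rw [hF]
    simp [hx0]
  rw [hF0] at hFT
  -- hFT : -(V x₀) ≤ (∫ s in 0..T, G s) - exp (μ T) * V (x T)
  have hexpT : Real.exp (-(μ * T)) * Real.exp (μ * T) = 1 := by
    rw [← Real.exp_add]; simp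
  have hexpTpos := Real.exp_pos (-(μ * T))
  have hstep : Real.exp (μ * T) * V (x T) ≤ V x₀ + ∫ s in (0:ℝ)..T, G s := by
    simp only [hF] at hFT
    linarith
  have hmul := mul_le_mul_of_nonneg_left hstep (le_of_lt hexpTpos)
  rw [← mul_assoc, hexpT, one_mul] at hmul
  -- identify the integral
  have hintid : ∫ s in (0:ℝ)..T, Real.exp (-(μ * (T - s))) * (f ybar - f (y s))
      = Real.exp (-(μ * T)) * ∫ s in (0:ℝ)..T, G s := by
    rw [← intervalIntegral.integral_const_mul]
    apply intervalIntegral.integral_congr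
    intro s _
    rw [hG]
    simp only
    rw [← mul_assoc, ← Real.exp_add]
    congr 2
    ring
  rw [hintid]
  rw [mul_add] at hmul
  linarith
end
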